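/- arXiv:1712.04746 — 3 statements merged into one kernel-verified Lean document; each statement's English description precedes it below -/
import Mathlib

section
/- If L is a finite-dimensional nilpotent Lie algebra of class two with dim(L/L²) = m, then L ⊗ L ≅ M(L) ⊕ L² ⊕ A(m(m+1)/2). -/
open LieAlgebra Matrix Module


open LieAlgebra

section ProdLie
variable {L M : Type*}

instance prodLieRing [LieRing L] [LieRing M] : LieRing (L × M) where
  bracket x y := (⁅x.1, y.1⁆, ⁅x.2, y.2⁆)
  add_lie x y z := by ext <;> simp [add_lie]
  lie_add x y z := by ext <;> simp [lie_add]
  lie_self x := by ext <;> simp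
  leibniz_lie x y z := by ext <;> simp

@[simp] theorem prod_bracket_fst [LieRing L] [LieRing M] (x y : L × M) :
    ⁅x, y⁆.1 = ⁅x.1, y.1⁆ := rfl
@[simp] theorem prod_bracket_snd [LieRing L] [LieRing M] (x y : L × M) :
    ⁅x, y⁆.2 = ⁅x.2, y.2⁆ := rfl

instance prodLieAlgebra (F : Type*) [CommRing F] [LieRing L] [LieRing M]
    [LieAlgebra F L] [LieAlgebra F M] : LieAlgebra F (L × M) where
  lie_smul t x y := by ext <;> simp
end ProdLie

section AbL
variable (F : Type*) [Field F]

/-- The abelian Lie algebra of dimension `k` over `F`. -/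
def AbLie (k : ℕ) : Type _ := Fin k → F

instance (k : ℕ) : AddCommGroup (AbLie F k) := Pi.addCommGroup
instance (k : ℕ) : Module F (AbLie F k) := Pi.module _ _ _

instance (k : ℕ) : LieRing (AbLie F k) where
  bracket _ _ := 0
  add_lie _ _ _ := (zero_add 0).symm
  lie_add _ _ _ := (zero_add 0).symm
  lie_self _ := rfl
  leibniz_lie _ _ _ := (zero_add 0).symm

instance (k : ℕ) : LieAlgebra F (AbLie F k) where
  lie_smul t x y := (smul_zero t).symm

instance (k : ℕ) : FiniteDimensional F (AbLie F k) :=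
  (inferInstance : FiniteDimensional F (Fin k → F))

instance (k : ℕ) : IsLieAbelian (AbLie F k) := ⟨fun _ _ => rfl⟩
end AbL
open Matrix
section Heis
variable (F : Type*) [Field F]

/-- The Heisenberg Lie algebra `H(m)` of dimension `2m+1`. -/
def Heis (m : ℕ) : Type _ := (Fin m → F) × (Fin m → F) × F

instance (m : ℕ) : AddCommGroup (Heis F m) := Prod.instAddCommGroup
instance (m : ℕ) : Module F (Heis F m) := Prod.instModule

instance (m : ℕ) : LieRing (Heis F m) where
  bracket x y := (0, 0, x.1 ⬝ᵥ y.2.1 - y.1 ⬝ᵥ x.2.1)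
  add_lie x y z := by
    refine Prod.ext ?_ (Prod.ext ?_ ?_)
    · show (0 : Fin m → F) = 0 + 0; rw [add_zero]
    · show (0 : Fin m → F) = 0 + 0; rw [add_zero]
    · show (x.1 + y.1) ⬝ᵥ z.2.1 - z.1 ⬝ᵥ (x.2.1 + y.2.1) =
        (x.1 ⬝ᵥ z.2.1 - z.1 ⬝ᵥ x.2.1) + (y.1 ⬝ᵥ z.2.1 - z.1 ⬝ᵥ y.2.1)
      rw [add_dotProduct, dotProduct_add]; ring
  lie_add x y z := by
    refine Prod.ext ?_ (Prod.ext ?_ ?_)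
    · show (0 : Fin m → F) = 0 + 0; rw [add_zero]
    · show (0 : Fin m → F) = 0 + 0; rw [add_zero]
    · show x.1 ⬝ᵥ (y.2.1 + z.2.1) - (y.1 + z.1) ⬝ᵥ x.2.1 =
        (x.1 ⬝ᵥ y.2.1 - y.1 ⬝ᵥ x.2.1) + (x.1 ⬝ᵥ z.2.1 - z.1 ⬝ᵥ x.2.1)
      rw [add_dotProduct, dotProduct_add]; ring
  lie_self x := by
    refine Prod.ext rfl (Prod.ext rfl ?_)
    show x.1 ⬝ᵥ x.2.1 - x.1 ⬝ᵥ x.2.1 = 0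
    ring
  leibniz_lie x y z := by
    refine Prod.ext ?_ (Prod.ext ?_ ?_)
    · show (0 : Fin m → F) = 0 + 0; rw [add_zero]
    · show (0 : Fin m → F) = 0 + 0; rw [add_zero]
    · show x.1 ⬝ᵥ (0 : Fin m → F) - (0 : Fin m → F) ⬝ᵥ x.2.1 =
        ((0 : Fin m → F) ⬝ᵥ z.2.1 - z.1 ⬝ᵥ (0 : Fin m → F)) +
          (y.1 ⬝ᵥ (0 : Fin m → F) - (0 : Fin m → F) ⬝ᵥ y.2.1)
      simp

instance (m : ℕ) : LieAlgebra F (Heis F m) where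
  lie_smul t x y := by
    refine Prod.ext ?_ (Prod.ext ?_ ?_)
    · show (0 : Fin m → F) = t • 0; rw [smul_zero]
    · show (0 : Fin m → F) = t • 0; rw [smul_zero]
    · show x.1 ⬝ᵥ (t • y.2.1) - (t • y.1) ⬝ᵥ x.2.1 = t • (x.1 ⬝ᵥ y.2.1 - y.1 ⬝ᵥ x.2.1)
      rw [dotProduct_smul, smul_dotProduct, smul_sub]

instance (m : ℕ) : FiniteDimensional F (Heis F m) :=
  (inferInstance : FiniteDimensional F ((Fin m → F) × (Fin m → F) × F))
end Heis
open LieAlgebra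

universe u v

section Functors
variable (F : Type u) [Field F] (L : Type v) [LieRing L] [LieAlgebra F L]

/-- The canonical free presentation `FreeLieAlgebra F L → L`. -/
noncomputable def presHom : FreeLieAlgebra F L →ₗ⁅F⁆ L := FreeLieAlgebra.lift F id

/-- The relation ideal `R` of the canonical free presentation. -/
noncomputable def presKer : LieIdeal F (FreeLieAlgebra F L) := (presHom F L).ker

/-- The Schur multiplier `M(L) = (R ∩ F²)/[R,F]` of a Lie algebra. -/
noncomputable abbrev Multiplier : Type (max u v) :=
  ↥((presKer F L ⊓ derivedSeries F (FreeLieAlgebra F L) 1).toSubmodule) ⧸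
    (Submodule.comap
      ((presKer F L ⊓ derivedSeries F (FreeLieAlgebra F L) 1).toSubmodule).subtype
      (⁅presKer F L, (⊤ : LieIdeal F (FreeLieAlgebra F L))⁆ : LieIdeal F (FreeLieAlgebra F L)).toSubmodule)


/-- Relations defining the nonabelian tensor square. -/
def tensorRel : Set (FreeLieAlgebra F (L × L)) :=
  letI e : L × L → FreeLieAlgebra F (L × L) := FreeLieAlgebra.of F
  { x | (∃ (c : F) (a b : L), x = e (c • a, b) - c • e (a, b)) ∨
        (∃ (c : F) (a b : L), x = e (a, c • b) - c • e (a, b)) ∨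
        (∃ a a' b : L, x = e (a + a', b) - e (a, b) - e (a', b)) ∨
        (∃ a b b' : L, x = e (a, b + b') - e (a, b) - e (a, b')) ∨
        (∃ a a' b : L, x = e (⁅a, a'⁆, b) - e (a, ⁅a', b⁆) + e (a', ⁅a, b⁆)) ∨
        (∃ a b b' : L, x = e (a, ⁅b, b'⁆) - e (⁅b', a⁆, b) + e (⁅b, a⁆, b')) ∨
        (∃ a b a' b' : L, x = ⁅e (a, b), e (a', b')⁆ + e (⁅b, a⁆, ⁅a', b'⁆)) }

/-- The nonabelian tensor square `L ⊗ L`. -/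
abbrev NTensor : Type (max u v) :=
  FreeLieAlgebra F (L × L) ⧸ LieSubmodule.lieSpan F (FreeLieAlgebra F (L × L)) (tensorRel F L)


/-- The generator `a ⊗ b` of the nonabelian tensor square. -/
noncomputable def tmk (a b : L) : NTensor F L :=
  LieSubmodule.Quotient.mk (N := LieSubmodule.lieSpan F (FreeLieAlgebra F (L × L)) (tensorRel F L))
    (FreeLieAlgebra.of F (a, b))

/-- The square `L □ L`, i.e. the subalgebra of `L ⊗ L` generated by the elements `a ⊗ a`. -/
noncomputable def SqSub : LieSubalgebra F (NTensor F L) :=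
  LieSubalgebra.lieSpan F _ { x | ∃ a : L, x = tmk F L a a }

/-- The ideal of `L ⊗ L` generated by the elements `a ⊗ a`. -/
noncomputable def sqIdeal : LieIdeal F (NTensor F L) :=
  LieSubmodule.lieSpan F _ { x | ∃ a : L, x = tmk F L a a }

/-- The exterior square `L ∧ L`. -/
noncomputable abbrev ExtSq : Type (max u v) := NTensor F L ⧸ sqIdeal F L


/-- The generator `a ∧ b` of the exterior square. -/
noncomputable def wmk (a b : L) : ExtSq F L :=
  LieSubmodule.Quotient.mk (N := sqIdeal F L) (tmk F L a b)

/-- The exterior center `Z^∧(L)`. -/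
noncomputable def extCenter : Set L := { x : L | ∀ l : L, wmk F L x l = 0 }

/-- A Lie algebra is capable if it is isomorphic to `H/Z(H)` for some Lie algebra `H`. -/
def Capable : Prop :=
  ∃ (H : Type (max u v)) (_ : LieRing H) (_ : LieAlgebra F H),
    Nonempty ((H ⧸ LieAlgebra.center F H) ≃ₗ⁅F⁆ L)

/-- The corank `t(L)` of an `n`-dimensional nilpotent Lie algebra. -/
noncomputable def corank : ℕ :=
  Module.finrank F L * (Module.finrank F L - 1) / 2 - Module.finrank F (Multiplier F L)

/-- The abelianization of `L` (as an `F`-module). -/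
noncomputable abbrev AbQuot : Type v := L ⧸ derivedSeries F L 1

end Functors
namespace TensorSq

universe w

section Triv
variable (F : Type u) [Field F]

/-- A module regarded as an abelian Lie algebra. -/
def TrivLie (M : Type w) : Type w := M

variable (M : Type w) [AddCommGroup M] [Module F M]

instance : AddCommGroup (TrivLie M) := inferInstanceAs (AddCommGroup M)
instance : Module F (TrivLie M) := inferInstanceAs (Module F M)

instance : LieRing (TrivLie M) where
  bracket _ _ := 0
  add_lie _ _ _ := (zero_add 0).symm
  lie_add _ _ _ := (zero_add 0).symm
  lie_self _ := rfl
  leibniz_lie _ _ _ := (zero_add 0).symm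

instance : LieAlgebra F (TrivLie M) where
  lie_smul t _ _ := (smul_zero t).symm

@[simp] theorem trivLie_bracket (x y : TrivLie M) : ⁅x, y⁆ = 0 := rfl

/-- Identity equivalence between `M` and `TrivLie M`. -/
def trivEquiv : TrivLie M ≃ₗ[F] M :=
  { toFun := id, invFun := id, map_add' := fun _ _ => rfl, map_smul' := fun _ _ => rfl,
    left_inv := fun _ => rfl, right_inv := fun _ => rfl }

end Triv

section Main
variable (F : Type u) [Field F] (L : Type u) [LieRing L] [LieAlgebra F L]

/-- The quotient map onto `NTensor` as a linear map. -/
noncomputable def ntmk : FreeLieAlgebra F (L × L) →ₗ[F] NTensor F L :=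
  (LieSubmodule.lieSpan F (FreeLieAlgebra F (L × L)) (tensorRel F L)).toSubmodule.mkQ

theorem ntmk_of (a b : L) : ntmk F L (FreeLieAlgebra.of F ((a, b) : L × L)) = tmk F L a b := rfl

theorem ntmk_bracket (x y : FreeLieAlgebra F (L × L)) :
    ntmk F L ⁅x, y⁆ = ⁅ntmk F L x, ntmk F L y⁆ :=
  LieSubmodule.Quotient.mk_bracket
    (I := LieSubmodule.lieSpan F (FreeLieAlgebra F (L × L)) (tensorRel F L)) x y

theorem mk_tensorRel_eq_zero {x : FreeLieAlgebra F (L × L)} (hx : x ∈ tensorRel F L) :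
    ntmk F L x = 0 := by
  rw [show ntmk F L x = LieSubmodule.Quotient.mk'
    (LieSubmodule.lieSpan F (FreeLieAlgebra F (L × L)) (tensorRel F L)) x from rfl,
    LieSubmodule.Quotient.mk_eq_zero]
  exact LieSubmodule.subset_lieSpan hx

theorem tmk_add_left (a a' b : L) :
    tmk F L (a + a') b = tmk F L a b + tmk F L a' b := by
  have h := mk_tensorRel_eq_zero F L (x :=
    FreeLieAlgebra.of F ((a + a', b) : L × L) - FreeLieAlgebra.of F ((a, b) : L × L)
      - FreeLieAlgebra.of F ((a', b) : L × L))
    (Or.inr (Or.inr (Or.inl ⟨a, a', b, rfl⟩)))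
  rw [map_sub, map_sub, sub_sub, sub_eq_zero, ntmk_of, ntmk_of, ntmk_of] at h
  exact h

theorem tmk_add_right (a b b' : L) :
    tmk F L a (b + b') = tmk F L a b + tmk F L a b' := by
  have h := mk_tensorRel_eq_zero F L (x :=
    FreeLieAlgebra.of F ((a, b + b') : L × L) - FreeLieAlgebra.of F ((a, b) : L × L)
      - FreeLieAlgebra.of F ((a, b') : L × L))
    (Or.inr (Or.inr (Or.inr (Or.inl ⟨a, b, b', rfl⟩))))
  rw [map_sub, map_sub, sub_sub, sub_eq_zero, ntmk_of, ntmk_of, ntmk_of] at h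
  exact h

theorem tmk_smul_left (c : F) (a b : L) :
    tmk F L (c • a) b = c • tmk F L a b := by
  have h := mk_tensorRel_eq_zero F L (x :=
    FreeLieAlgebra.of F ((c • a, b) : L × L) - c • FreeLieAlgebra.of F ((a, b) : L × L))
    (Or.inl ⟨c, a, b, rfl⟩)
  rw [map_sub, LinearMap.map_smul, sub_eq_zero, ntmk_of, ntmk_of] at h
  exact h

theorem tmk_smul_right (c : F) (a b : L) :
    tmk F L a (c • b) = c • tmk F L a b := by
  have h := mk_tensorRel_eq_zero F L (x :=
    FreeLieAlgebra.of F ((a, c • b) : L × L) - c • FreeLieAlgebra.of F ((a, b) : L × L))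
    (Or.inr (Or.inl ⟨c, a, b, rfl⟩))
  rw [map_sub, LinearMap.map_smul, sub_eq_zero, ntmk_of, ntmk_of] at h
  exact h

/-- The bilinear map `(a, b) ↦ a ⊗ b` into the nonabelian tensor square. -/
noncomputable def tb : L →ₗ[F] L →ₗ[F] NTensor F L :=
  LinearMap.mk₂ F (tmk F L) (tmk_add_left F L) (tmk_smul_left F L)
    (tmk_add_right F L) (tmk_smul_right F L)

@[simp] theorem tb_apply (a b : L) : tb F L a b = tmk F L a b := rfl

theorem tmk_rel5 (a a' b : L) :
    tmk F L ⁅a, a'⁆ b = tmk F L a ⁅a', b⁆ - tmk F L a' ⁅a, b⁆ := by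
  have h := mk_tensorRel_eq_zero F L (x :=
    FreeLieAlgebra.of F ((⁅a, a'⁆, b) : L × L) - FreeLieAlgebra.of F ((a, ⁅a', b⁆) : L × L)
      + FreeLieAlgebra.of F ((a', ⁅a, b⁆) : L × L))
    (Or.inr (Or.inr (Or.inr (Or.inr (Or.inl ⟨a, a', b, rfl⟩)))))
  rw [map_add, map_sub, ntmk_of, ntmk_of, ntmk_of] at h
  linear_combination (norm := abel) h

theorem tmk_rel6 (a b b' : L) :
    tmk F L a ⁅b, b'⁆ = tmk F L ⁅b', a⁆ b - tmk F L ⁅b, a⁆ b' := by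
  have h := mk_tensorRel_eq_zero F L (x :=
    FreeLieAlgebra.of F ((a, ⁅b, b'⁆) : L × L) - FreeLieAlgebra.of F ((⁅b', a⁆, b) : L × L)
      + FreeLieAlgebra.of F ((⁅b, a⁆, b') : L × L))
    (Or.inr (Or.inr (Or.inr (Or.inr (Or.inr (Or.inl ⟨a, b, b', rfl⟩))))))
  rw [map_add, map_sub, ntmk_of, ntmk_of, ntmk_of] at h
  linear_combination (norm := abel) h

theorem tmk_rel7 (a b a' b' : L) :
    ⁅tmk F L a b, tmk F L a' b'⁆ = - tmk F L ⁅b, a⁆ ⁅a', b'⁆ := by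
  have h := mk_tensorRel_eq_zero F L (x :=
    ⁅FreeLieAlgebra.of F ((a, b) : L × L), FreeLieAlgebra.of F ((a', b') : L × L)⁆
      + FreeLieAlgebra.of F ((⁅b, a⁆, ⁅a', b'⁆) : L × L))
    (Or.inr (Or.inr (Or.inr (Or.inr (Or.inr (Or.inr ⟨a, b, a', b', rfl⟩))))))
  rw [map_add, ntmk_of] at h
  rw [ntmk_bracket, ntmk_of, ntmk_of] at h
  linear_combination (norm := abel) h

/-- The swap identity `⁅x,z⁆ ⊗ y = y ⊗ ⁅z,x⁆`, valid in any `L ⊗ L`. -/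
theorem tmk_swap (x z y : L) : tmk F L ⁅x, z⁆ y = tmk F L y ⁅z, x⁆ := by
  have h6 := tmk_rel6 F L z x y
  have h5 := tmk_rel5 F L y z x
  have hneg : tmk F L z ⁅y, x⁆ = - tmk F L z ⁅x, y⁆ := by
    rw [← lie_skew]
    exact map_neg (tb F L z) _
  rw [h5, hneg] at h6
  linear_combination (norm := abel) h6


section Lift
variable {F L}
variable {M : Type u} [AddCommGroup M] [Module F M]

/-- The lift of a bilinear map to the free Lie algebra on `L × L`, valued in a
module viewed as an abelian Lie algebra. -/
noncomputable def tLiftAux (b : L →ₗ[F] L →ₗ[F] M) :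
    FreeLieAlgebra F (L × L) →ₗ⁅F⁆ TrivLie M :=
  FreeLieAlgebra.lift F (L := TrivLie M) (fun p : L × L => ((b p.1 p.2 : M) : TrivLie M))

theorem tLiftAux_of (b : L →ₗ[F] L →ₗ[F] M) (a c : L) :
    tLiftAux b (FreeLieAlgebra.of F ((a, c) : L × L)) = ((b a c : M) : TrivLie M) :=
  FreeLieAlgebra.lift_of_apply _ _

/-- Universal property: a bilinear map satisfying the tensor relations factors
through `NTensor F L`. -/
noncomputable def tLift (b : L →ₗ[F] L →ₗ[F] M)
    (h5 : ∀ a a' c : L, b ⁅a, a'⁆ c = b a ⁅a', c⁆ - b a' ⁅a, c⁆)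
    (h6 : ∀ a c c' : L, b a ⁅c, c'⁆ = b ⁅c', a⁆ c - b ⁅c, a⁆ c')
    (h7 : ∀ a c a' c' : L, b ⁅c, a⁆ ⁅a', c'⁆ = 0) :
    NTensor F L →ₗ[F] M :=
  Submodule.liftQ _ ((trivEquiv F M).toLinearMap ∘ₗ (tLiftAux b).toLinearMap)
    (by
      have hofs : ∀ a c : L, tLiftAux b (FreeLieAlgebra.of F ((a, c) : L × L))
          = ((b a c : M) : TrivLie M) := tLiftAux_of b
      have h1 : LieSubmodule.lieSpan F (FreeLieAlgebra F (L × L)) (tensorRel F L) ≤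
          (tLiftAux b).ker := by
        rw [LieSubmodule.lieSpan_le]
        rintro x (⟨c,a,a',rfl⟩|⟨c,a,a',rfl⟩|⟨a,a',c,rfl⟩|⟨a,c,c',rfl⟩|⟨a,a',c,rfl⟩|⟨a,c,c',rfl⟩|⟨a,c,a',c',rfl⟩) <;>
          rw [SetLike.mem_coe, LieHom.mem_ker]
        · rw [map_sub, map_smul, hofs, hofs]
          show b (c • a) a' - c • b a a' = (0 : M)
          rw [b.map_smul, LinearMap.smul_apply, sub_self]
        · rw [map_sub, map_smul, hofs, hofs]
          show b a (c • a') - c • b a a' = (0 : M)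
          rw [(b a).map_smul, sub_self]
        · rw [map_sub, map_sub, hofs, hofs, hofs]
          show b (a + a') c - b a c - b a' c = (0 : M)
          rw [b.map_add, LinearMap.add_apply, add_sub_cancel_left, sub_self]
        · rw [map_sub, map_sub, hofs, hofs, hofs]
          show b a (c + c') - b a c - b a c' = (0 : M)
          rw [(b a).map_add, add_sub_cancel_left, sub_self]
        · rw [map_add, map_sub, hofs, hofs, hofs]
          show b ⁅a, a'⁆ c - b a ⁅a', c⁆ + b a' ⁅a, c⁆ = (0 : M)
          rw [h5]; abel
        · rw [map_add, map_sub, hofs, hofs, hofs]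
          show b a ⁅c, c'⁆ - b ⁅c', a⁆ c + b ⁅c, a⁆ c' = (0 : M)
          rw [h6]; abel
        · rw [map_add, LieHom.map_lie, trivLie_bracket, hofs]
          show 0 + b ⁅c, a⁆ ⁅a', c'⁆ = (0 : M)
          rw [h7, add_zero]
      intro x hx
      rw [LinearMap.mem_ker, LinearMap.comp_apply]
      have hz : tLiftAux b x = 0 := LieHom.mem_ker.mp (h1 hx)
      rw [show (tLiftAux b).toLinearMap x = tLiftAux b x from rfl, hz, map_zero])

theorem tLift_tmk (b : L →ₗ[F] L →ₗ[F] M)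
    (h5 : ∀ a a' c : L, b ⁅a, a'⁆ c = b a ⁅a', c⁆ - b a' ⁅a, c⁆)
    (h6 : ∀ a c c' : L, b a ⁅c, c'⁆ = b ⁅c', a⁆ c - b ⁅c, a⁆ c')
    (h7 : ∀ a c a' c' : L, b ⁅c, a⁆ ⁅a', c'⁆ = 0) (a c : L) :
    tLift b h5 h6 h7 (tmk F L a c) = b a c := by
  have h0 : tLift b h5 h6 h7 (tmk F L a c) =
      trivEquiv F M (tLiftAux b (FreeLieAlgebra.of F ((a, c) : L × L))) := rfl
  rw [h0, tLiftAux_of]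
  rfl

end Lift

section Relations
variable {F L}
variable {M' : Type u} [AddCommGroup M'] [Module F M']

theorem derived_one_coe_eq_span :
    ((derivedSeries F L 1).toSubmodule : Submodule F L) =
      Submodule.span F {m : L | ∃ x ∈ (⊤ : LieIdeal F L), ∃ n ∈ (⊤ : LieIdeal F L), ⁅x, n⁆ = m} := by
  rw [LieAlgebra.derivedSeries_def, LieAlgebra.derivedSeriesOfIdeal_succ,
    LieAlgebra.derivedSeriesOfIdeal_zero]
  exact LieSubmodule.lieIdeal_oper_eq_linear_span' ..

theorem linear_vanish_on_derived (ψ : L →ₗ[F] M') (h : ∀ u v : L, ψ ⁅u, v⁆ = 0)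
    {c : L} (hc : c ∈ derivedSeries F L 1) : ψ c = 0 := by
  have hle : ((derivedSeries F L 1).toSubmodule : Submodule F L) ≤ LinearMap.ker ψ := by
    rw [derived_one_coe_eq_span, Submodule.span_le]
    rintro y ⟨u, -, v, -, rfl⟩
    exact h u v
  exact hle hc

theorem central_of_mem (h2 : LieModule.lowerCentralSeries F L L 2 = ⊥)
    {c : L} (hc : c ∈ derivedSeries F L 1) (x : L) : ⁅x, c⁆ = 0 := by
  have h1 : c ∈ LieModule.lowerCentralSeries F L L 1 :=
    LieModule.derivedSeries_le_lowerCentralSeries F L 1 hc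
  have hmem : ⁅x, c⁆ ∈ LieModule.lowerCentralSeries F L L 2 := by
    rw [show (2 : ℕ) = 1 + 1 from rfl, LieModule.lowerCentralSeries_succ]
    exact LieSubmodule.lie_mem_lie (LieSubmodule.mem_top x) h1
  rw [h2] at hmem
  exact hmem

theorem tmk_D_skew {c : L} (hc : c ∈ derivedSeries F L 1) (x : L) :
    tmk F L c x = - tmk F L x c := by
  have h : ∀ u v : L, ((tb F L).flip x + tb F L x) ⁅u, v⁆ = 0 := by
    intro u v
    have hs : tmk F L ⁅u, v⁆ x = - tmk F L x ⁅u, v⁆ := by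
      rw [tmk_swap, ← lie_skew v u]
      exact map_neg (tb F L x) _
    show tmk F L ⁅u, v⁆ x + tmk F L x ⁅u, v⁆ = 0
    rw [hs]; abel
  have := linear_vanish_on_derived ((tb F L).flip x + tb F L x) h hc
  change tmk F L c x + tmk F L x c = 0 at this
  linear_combination (norm := abel) this

theorem tmk_D_D (h2 : LieModule.lowerCentralSeries F L L 2 = ⊥)
    {c d : L} (hc : c ∈ derivedSeries F L 1) (hd : d ∈ derivedSeries F L 1) :
    tmk F L c d = 0 := by
  have h : ∀ u v : L, ((tb F L).flip d) ⁅u, v⁆ = 0 := by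
    intro u v
    show tmk F L ⁅u, v⁆ d = 0
    rw [tmk_rel5, central_of_mem h2 hd v, central_of_mem h2 hd u]
    rw [show tmk F L u (0 : L) = 0 from map_zero (tb F L u),
      show tmk F L v (0 : L) = 0 from map_zero (tb F L v), sub_zero]
  exact linear_vanish_on_derived _ h hc

theorem tmk_sq_congr (h2 : LieModule.lowerCentralSeries F L L 2 = ⊥)
    (x : L) {c : L} (hc : c ∈ derivedSeries F L 1) :
    tmk F L (x + c) (x + c) = tmk F L x x := by
  rw [tmk_add_left, tmk_add_right, tmk_add_right, tmk_D_skew hc x, tmk_D_D h2 hc hc]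
  abel

end Relations
section Span

theorem ntmk_surjective : Function.Surjective (ntmk F L) :=
  Submodule.mkQ_surjective _

theorem span_tmk_eq_top :
    Submodule.span F (Set.range fun p : L × L => tmk F L p.1 p.2) = ⊤ := by
  set S := Submodule.span F (Set.range fun p : L × L => tmk F L p.1 p.2) with hS
  have hbr : ∀ x ∈ S, ∀ y ∈ S, ⁅x, y⁆ ∈ S := by
    intro x hx y hy
    induction hx, hy using Submodule.span_induction₂ with
    | mem_mem u v hu hv =>
        obtain ⟨p, rfl⟩ := hu; obtain ⟨q, rfl⟩ := hv
        rw [tmk_rel7]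
        exact S.neg_mem (Submodule.subset_span ⟨(⁅p.2, p.1⁆, ⁅q.1, q.2⁆), rfl⟩)
    | zero_left v hv => rw [zero_lie]; exact S.zero_mem
    | zero_right u hu =>
        rw [(lie_zero u : ⁅u, (0 : NTensor F L)⁆ = 0)]; exact S.zero_mem
    | add_left u₁ u₂ v h₁ h₂ hv hu₁ hu₂ => rw [add_lie]; exact S.add_mem hu₁ hu₂
    | add_right u v₁ v₂ hu h₁ h₂ hv₁ hv₂ =>
        rw [(lie_add u v₁ v₂ : ⁅u, v₁ + v₂⁆ = ⁅u, v₁⁆ + ⁅u, v₂⁆)]; exact S.add_mem hv₁ hv₂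
    | smul_left c u v hu hv h => rw [smul_lie]; exact S.smul_mem c h
    | smul_right c u v hu hv h =>
        rw [(lie_smul c u v : ⁅u, c • v⁆ = c • ⁅u, v⁆)]; exact S.smul_mem c h
  let K2 : LieSubalgebra F (FreeLieAlgebra F (L × L)) :=
    { Submodule.comap (ntmk F L) S with
      lie_mem' := fun {x y} hx hy => by
        have hx' : ntmk F L x ∈ S := hx
        have hy' : ntmk F L y ∈ S := hy
        show ntmk F L ⁅x, y⁆ ∈ S
        rw [ntmk_bracket]
        exact hbr _ hx' _ hy' }
  have h_of : ∀ p : L × L, FreeLieAlgebra.of F p ∈ K2 := by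
    intro p
    show ntmk F L (FreeLieAlgebra.of F p) ∈ S
    rw [show ntmk F L (FreeLieAlgebra.of F p) = tmk F L p.1 p.2 from rfl]
    exact Submodule.subset_span ⟨p, rfl⟩
  let j : FreeLieAlgebra F (L × L) →ₗ⁅F⁆ K2 :=
    FreeLieAlgebra.lift F (fun p => (⟨FreeLieAlgebra.of F p, h_of p⟩ : K2))
  have hid : K2.incl.comp j = LieHom.id := by
    apply (FreeLieAlgebra.lift F).symm.injective
    rw [FreeLieAlgebra.lift_symm_apply, FreeLieAlgebra.lift_symm_apply]
    funext p
    show K2.incl (j (FreeLieAlgebra.of F p)) = LieHom.id (FreeLieAlgebra.of F p)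
    rw [show j (FreeLieAlgebra.of F p) = ⟨FreeLieAlgebra.of F p, h_of p⟩ from
      FreeLieAlgebra.lift_of_apply _ _]
    rfl
  have hmem : ∀ z : FreeLieAlgebra F (L × L), z ∈ K2 := by
    intro z
    have : K2.incl (j z) = z := by rw [← LieHom.comp_apply, hid]; rfl
    rw [← this]
    exact (j z).2
  rw [eq_top_iff]
  intro x _
  obtain ⟨z, rfl⟩ := ntmk_surjective F L x
  exact hmem z

/-- The canonical surjection from the ordinary tensor square. -/
noncomputable def tau : TensorProduct F L L →ₗ[F] NTensor F L :=
  TensorProduct.lift (tb F L)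

theorem tau_surjective : Function.Surjective (tau F L) := by
  rw [← LinearMap.range_eq_top, eq_top_iff, ← span_tmk_eq_top F L]
  rw [Submodule.span_le]
  rintro x ⟨p, rfl⟩
  exact ⟨p.1 ⊗ₜ[F] p.2, TensorProduct.lift.tmul _ _⟩

theorem ntensor_finite [FiniteDimensional F L] : Module.Finite F (NTensor F L) :=
  Module.Finite.of_surjective (tau F L) (tau_surjective F L)

end Span
section Beta

theorem lie_mem_derived_one {K : Type u} [LieRing K] [LieAlgebra F K] (x y : K) :
    ⁅x, y⁆ ∈ derivedSeries F K 1 := by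
  rw [LieAlgebra.derivedSeries_def, LieAlgebra.derivedSeriesOfIdeal_succ,
    LieAlgebra.derivedSeriesOfIdeal_zero]
  exact LieSubmodule.lie_mem_lie (LieSubmodule.mem_top x) (LieSubmodule.mem_top y)

/-- `F² = [F,F]` of the free Lie algebra, as a submodule. -/
noncomputable abbrev S2 : Submodule F (FreeLieAlgebra F L) :=
  (derivedSeries F (FreeLieAlgebra F L) 1).toSubmodule

/-- `[R,F]`, as a submodule. -/
noncomputable abbrev TT' : Submodule F (FreeLieAlgebra F L) :=
  (⁅presKer F L, (⊤ : LieIdeal F (FreeLieAlgebra F L))⁆ :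
    LieIdeal F (FreeLieAlgebra F L)).toSubmodule

/-- `F²/[R,F]`. -/
noncomputable abbrev QT : Type u :=
  S2 F L ⧸ Submodule.comap (S2 F L).subtype (TT' F L)

theorem presHom_of (a : L) : presHom F L (FreeLieAlgebra.of F a) = a :=
  FreeLieAlgebra.lift_of_apply _ _

theorem mem_presKer {x : FreeLieAlgebra F L} : x ∈ presKer F L ↔ presHom F L x = 0 :=
  LieHom.mem_ker

theorem memR_sub_of (x : FreeLieAlgebra F L) :
    x - FreeLieAlgebra.of F (presHom F L x) ∈ presKer F L := by
  rw [mem_presKer, map_sub, presHom_of, sub_self]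

variable {F L}

theorem memT_left {x : FreeLieAlgebra F L} (hx : x ∈ presKer F L) (y : FreeLieAlgebra F L) :
    ⁅x, y⁆ ∈ TT' F L :=
  LieSubmodule.lie_mem_lie hx (LieSubmodule.mem_top y)

theorem memT_right {x : FreeLieAlgebra F L} (hx : x ∈ presKer F L) (y : FreeLieAlgebra F L) :
    ⁅y, x⁆ ∈ TT' F L := by
  rw [← lie_skew y x]
  exact Submodule.neg_mem _ (memT_left hx y)

variable (F L)

/-- The class of an element of `F²` in `QT`. -/
noncomputable def qmk (x : FreeLieAlgebra F L) (h : x ∈ S2 F L) : QT F L :=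
  Submodule.Quotient.mk (⟨x, h⟩ : S2 F L)

variable {F L}

theorem qmk_eq_iff {x y : FreeLieAlgebra F L} (hx : x ∈ S2 F L) (hy : y ∈ S2 F L) :
    qmk F L x hx = qmk F L y hy ↔ x - y ∈ TT' F L := by
  rw [qmk, qmk, Submodule.Quotient.eq, Submodule.mem_comap]
  rfl

theorem qmk_eq_zero_iff {x : FreeLieAlgebra F L} (hx : x ∈ S2 F L) :
    qmk F L x hx = 0 ↔ x ∈ TT' F L := by
  rw [qmk, Submodule.Quotient.mk_eq_zero, Submodule.mem_comap]
  rfl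

theorem qmk_add {x y : FreeLieAlgebra F L} (hx : x ∈ S2 F L) (hy : y ∈ S2 F L) :
    qmk F L (x + y) (add_mem hx hy) = qmk F L x hx + qmk F L y hy := by
  rw [qmk, qmk, qmk, show (⟨x + y, add_mem hx hy⟩ : S2 F L) = ⟨x, hx⟩ + ⟨y, hy⟩ from rfl,
    Submodule.Quotient.mk_add]

theorem qmk_sub {x y : FreeLieAlgebra F L} (hx : x ∈ S2 F L) (hy : y ∈ S2 F L) :
    qmk F L (x - y) (sub_mem hx hy) = qmk F L x hx - qmk F L y hy := by
  rw [qmk, qmk, qmk, show (⟨x - y, sub_mem hx hy⟩ : S2 F L) = ⟨x, hx⟩ - ⟨y, hy⟩ from rfl,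
    Submodule.Quotient.mk_sub]

theorem qmk_smul {x : FreeLieAlgebra F L} (c : F) (hx : x ∈ S2 F L) :
    qmk F L (c • x) (Submodule.smul_mem _ c hx) = c • qmk F L x hx := by
  rw [qmk, qmk, show (⟨c • x, Submodule.smul_mem _ c hx⟩ : S2 F L) = c • ⟨x, hx⟩ from rfl,
    Submodule.Quotient.mk_smul]

variable (F L)

theorem br_mem_S2 (x y : FreeLieAlgebra F L) : ⁅x, y⁆ ∈ S2 F L :=
  lie_mem_derived_one F x y

/-- The bilinear map `(a, c) ↦ ⁅of a, of c⁆` into `F²/[R,F]`. -/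
noncomputable def bB : L →ₗ[F] L →ₗ[F] QT F L :=
  LinearMap.mk₂ F
    (fun a c => qmk F L ⁅FreeLieAlgebra.of F a, FreeLieAlgebra.of F c⁆ (br_mem_S2 F L _ _))
    (fun a a' c => by
      rw [← qmk_add (br_mem_S2 F L _ _) (br_mem_S2 F L _ _), qmk_eq_iff]
      have key : ⁅FreeLieAlgebra.of F (a + a'), FreeLieAlgebra.of F c⁆ -
          (⁅FreeLieAlgebra.of F a, FreeLieAlgebra.of F c⁆ +
            ⁅FreeLieAlgebra.of F a', FreeLieAlgebra.of F c⁆) =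
          ⁅FreeLieAlgebra.of F (a + a') - FreeLieAlgebra.of F a - FreeLieAlgebra.of F a',
            FreeLieAlgebra.of F c⁆ := by
        rw [sub_lie, sub_lie]; abel
      rw [key]
      refine memT_left ?_ _
      rw [mem_presKer, map_sub, map_sub, presHom_of, presHom_of, presHom_of,
        sub_sub, sub_self])
    (fun t a c => by
      rw [← qmk_smul t (br_mem_S2 F L _ _), qmk_eq_iff]
      have key : ⁅FreeLieAlgebra.of F (t • a), FreeLieAlgebra.of F c⁆ -
          t • ⁅FreeLieAlgebra.of F a, FreeLieAlgebra.of F c⁆ =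
          ⁅FreeLieAlgebra.of F (t • a) - t • FreeLieAlgebra.of F a, FreeLieAlgebra.of F c⁆ := by
        rw [sub_lie, smul_lie]
      rw [key]
      refine memT_left ?_ _
      rw [mem_presKer, map_sub, map_smul, presHom_of, presHom_of, sub_self])
    (fun a c c' => by
      rw [← qmk_add (br_mem_S2 F L _ _) (br_mem_S2 F L _ _), qmk_eq_iff]
      have key : ⁅FreeLieAlgebra.of F a, FreeLieAlgebra.of F (c + c')⁆ -
          (⁅FreeLieAlgebra.of F a, FreeLieAlgebra.of F c⁆ +
            ⁅FreeLieAlgebra.of F a, FreeLieAlgebra.of F c'⁆) =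
          ⁅FreeLieAlgebra.of F a,
            FreeLieAlgebra.of F (c + c') - FreeLieAlgebra.of F c - FreeLieAlgebra.of F c'⁆ := by
        rw [lie_sub, lie_sub]; abel
      rw [key]
      refine memT_right ?_ _
      rw [mem_presKer, map_sub, map_sub, presHom_of, presHom_of, presHom_of,
        sub_sub, sub_self])
    (fun t a c => by
      rw [← qmk_smul t (br_mem_S2 F L _ _), qmk_eq_iff]
      have key : ⁅FreeLieAlgebra.of F a, FreeLieAlgebra.of F (t • c)⁆ -
          t • ⁅FreeLieAlgebra.of F a, FreeLieAlgebra.of F c⁆ =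
          ⁅FreeLieAlgebra.of F a, FreeLieAlgebra.of F (t • c) - t • FreeLieAlgebra.of F c⁆ := by
        rw [lie_sub, (lie_smul t (FreeLieAlgebra.of F a) (FreeLieAlgebra.of F c) :
          ⁅FreeLieAlgebra.of F a, t • FreeLieAlgebra.of F c⁆ =
            t • ⁅FreeLieAlgebra.of F a, FreeLieAlgebra.of F c⁆)]
      rw [key]
      refine memT_right ?_ _
      rw [mem_presKer, map_sub, map_smul, presHom_of, presHom_of, sub_self])

theorem bB_apply (a c : L) :
    bB F L a c = qmk F L ⁅FreeLieAlgebra.of F a, FreeLieAlgebra.of F c⁆ (br_mem_S2 F L _ _) :=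
  rfl

theorem bB_rel5 (a a' c : L) : bB F L ⁅a, a'⁆ c = bB F L a ⁅a', c⁆ - bB F L a' ⁅a, c⁆ := by
  rw [bB_apply, bB_apply, bB_apply, ← qmk_sub (br_mem_S2 F L _ _) (br_mem_S2 F L _ _),
    qmk_eq_iff]
  set u := FreeLieAlgebra.of F a
  set v := FreeLieAlgebra.of F a'
  set w := FreeLieAlgebra.of F c
  set r1 := FreeLieAlgebra.of F ⁅a, a'⁆ - ⁅u, v⁆ with hr1
  set r2 := FreeLieAlgebra.of F ⁅a', c⁆ - ⁅v, w⁆ with hr2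
  set r3 := FreeLieAlgebra.of F ⁅a, c⁆ - ⁅u, w⁆ with hr3
  have hm1 : r1 ∈ presKer F L := by
    rw [mem_presKer, map_sub, LieHom.map_lie, presHom_of, presHom_of, presHom_of,
      sub_self]
  have hm2 : r2 ∈ presKer F L := by
    rw [mem_presKer, map_sub, LieHom.map_lie, presHom_of, presHom_of, presHom_of,
      sub_self]
  have hm3 : r3 ∈ presKer F L := by
    rw [mem_presKer, map_sub, LieHom.map_lie, presHom_of, presHom_of, presHom_of,
      sub_self]
  have key : ⁅FreeLieAlgebra.of F ⁅a, a'⁆, w⁆ - (⁅u, FreeLieAlgebra.of F ⁅a', c⁆⁆ -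
      ⁅v, FreeLieAlgebra.of F ⁅a, c⁆⁆) = ⁅r1, w⁆ - ⁅u, r2⁆ + ⁅v, r3⁆ := by
    rw [hr1, hr2, hr3, sub_lie, lie_sub, lie_sub, lie_lie]
    abel
  rw [key]
  exact Submodule.add_mem _ (Submodule.sub_mem _ (memT_left hm1 w) (memT_right hm2 u))
    (memT_right hm3 v)

theorem bB_rel6 (a c c' : L) : bB F L a ⁅c, c'⁆ = bB F L ⁅c', a⁆ c - bB F L ⁅c, a⁆ c' := by
  rw [bB_apply, bB_apply, bB_apply, ← qmk_sub (br_mem_S2 F L _ _) (br_mem_S2 F L _ _),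
    qmk_eq_iff]
  set u := FreeLieAlgebra.of F a
  set w := FreeLieAlgebra.of F c
  set w' := FreeLieAlgebra.of F c'
  set r1 := FreeLieAlgebra.of F ⁅c, c'⁆ - ⁅w, w'⁆ with hr1
  set r2 := FreeLieAlgebra.of F ⁅c', a⁆ - ⁅w', u⁆ with hr2
  set r3 := FreeLieAlgebra.of F ⁅c, a⁆ - ⁅w, u⁆ with hr3
  have hm1 : r1 ∈ presKer F L := by
    rw [mem_presKer, map_sub, LieHom.map_lie, presHom_of, presHom_of, presHom_of,
      sub_self]
  have hm2 : r2 ∈ presKer F L := by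
    rw [mem_presKer, map_sub, LieHom.map_lie, presHom_of, presHom_of, presHom_of,
      sub_self]
  have hm3 : r3 ∈ presKer F L := by
    rw [mem_presKer, map_sub, LieHom.map_lie, presHom_of, presHom_of, presHom_of,
      sub_self]
  have hskew : ⁅⁅w, u⁆, w'⁆ = ⁅w', ⁅u, w⁆⁆ := by
    rw [← lie_skew, ← lie_skew u w, lie_neg]
  have h3 : ⁅w', w⁆ = -⁅w, w'⁆ := (lie_skew w' w).symm
  have key : ⁅u, FreeLieAlgebra.of F ⁅c, c'⁆⁆ - (⁅FreeLieAlgebra.of F ⁅c', a⁆, w⁆ -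
      ⁅FreeLieAlgebra.of F ⁅c, a⁆, w'⁆) = ⁅u, r1⁆ - ⁅r2, w⁆ + ⁅r3, w'⁆ := by
    rw [hr1, hr2, hr3, lie_sub, sub_lie, sub_lie, lie_lie w' u w, hskew, h3, lie_neg]
    abel
  rw [key]
  exact Submodule.add_mem _ (Submodule.sub_mem _ (memT_right hm1 u) (memT_left hm2 w))
    (memT_left hm3 w')

theorem bB_rel7 (h2 : LieModule.lowerCentralSeries F L L 2 = ⊥) (a c a' c' : L) :
    bB F L ⁅c, a⁆ ⁅a', c'⁆ = 0 := by
  rw [bB_apply, qmk_eq_zero_iff]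
  set u := FreeLieAlgebra.of F a
  set w := FreeLieAlgebra.of F c
  set z := FreeLieAlgebra.of F (⁅a', c'⁆ : L) with hz
  have hzc : (⁅a', c'⁆ : L) ∈ derivedSeries F L 1 := lie_mem_derived_one F a' c'
  set r1 := FreeLieAlgebra.of F ⁅c, a⁆ - ⁅w, u⁆ with hr1
  have hm1 : r1 ∈ presKer F L := by
    rw [mem_presKer, map_sub, LieHom.map_lie, presHom_of, presHom_of, presHom_of,
      sub_self]
  have hm2 : ⁅u, z⁆ ∈ presKer F L := by
    rw [mem_presKer, LieHom.map_lie, presHom_of, presHom_of]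
    exact central_of_mem h2 hzc a
  have hm3 : ⁅w, z⁆ ∈ presKer F L := by
    rw [mem_presKer, LieHom.map_lie, presHom_of, presHom_of]
    exact central_of_mem h2 hzc c
  have key : ⁅FreeLieAlgebra.of F ⁅c, a⁆, z⁆ = ⁅r1, z⁆ + (⁅w, ⁅u, z⁆⁆ - ⁅u, ⁅w, z⁆⁆) := by
    rw [hr1, sub_lie, lie_lie]
    abel
  rw [key]
  exact Submodule.add_mem _ (memT_left hm1 z)
    (Submodule.sub_mem _ (memT_right hm2 w) (memT_right hm3 u))

/-- The map `β : L ⊗ L → F²/[R,F]`. -/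
noncomputable def betaMap (h2 : LieModule.lowerCentralSeries F L L 2 = ⊥) :
    NTensor F L →ₗ[F] QT F L :=
  tLift (bB F L) (bB_rel5 F L) (bB_rel6 F L) (bB_rel7 F L h2)

theorem betaMap_tmk (h2 : LieModule.lowerCentralSeries F L L 2 = ⊥) (a c : L) :
    betaMap F L h2 (tmk F L a c) =
      qmk F L ⁅FreeLieAlgebra.of F a, FreeLieAlgebra.of F c⁆ (br_mem_S2 F L _ _) :=
  tLift_tmk _ _ _ _ a c

end Beta
section Delta

theorem derived_coe_span (K : Type u) [LieRing K] [LieAlgebra F K] :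
    ((derivedSeries F K 1).toSubmodule : Submodule F K) =
      Submodule.span F {m : K | ∃ x ∈ (⊤ : LieIdeal F K), ∃ n ∈ (⊤ : LieIdeal F K), ⁅x, n⁆ = m} := by
  rw [LieAlgebra.derivedSeries_def, LieAlgebra.derivedSeriesOfIdeal_succ,
    LieAlgebra.derivedSeriesOfIdeal_zero]
  exact LieSubmodule.lieIdeal_oper_eq_linear_span' ..

/-- The span of the squares `a ⊗ a` in `NTensor`. -/
noncomputable def Ksq : Submodule F (NTensor F L) :=
  Submodule.span F {x | ∃ a : L, x = tmk F L a a}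

/-- `(L ⊗ L) / ⟨a ⊗ a⟩`, an auxiliary module. -/
noncomputable abbrev PQ : Type u := NTensor F L ⧸ Ksq F L

/-- The bilinear map `(a, c) ↦ a ⊗ c mod squares`. -/
noncomputable def tbbar : L →ₗ[F] L →ₗ[F] PQ F L :=
  (tb F L).compr₂ (Ksq F L).mkQ

theorem tbbar_apply (a c : L) : tbbar F L a c = (Ksq F L).mkQ (tmk F L a c) := rfl

theorem tbbar_self (a : L) : tbbar F L a a = 0 := by
  rw [tbbar_apply, Submodule.mkQ_apply, Submodule.Quotient.mk_eq_zero]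
  exact Submodule.subset_span ⟨a, rfl⟩

theorem tbbar_leibniz (x y z : L) :
    tbbar F L x ⁅y, z⁆ = tbbar F L ⁅x, y⁆ z + tbbar F L y ⁅x, z⁆ := by
  have h := congrArg (Ksq F L).mkQ (tmk_rel5 F L x y z)
  rw [map_sub] at h
  rw [tbbar_apply, tbbar_apply, tbbar_apply]
  rw [h]
  abel

noncomputable instance : LieRing (L × PQ F L) where
  bracket x y := (⁅x.1, y.1⁆, tbbar F L x.1 y.1)
  add_lie x y z := by
    refine Prod.ext ?_ ?_
    · show ⁅(x + y).1, z.1⁆ = ⁅x.1, z.1⁆ + ⁅y.1, z.1⁆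
      rw [Prod.fst_add, add_lie]
    · show tbbar F L (x + y).1 z.1 = tbbar F L x.1 z.1 + tbbar F L y.1 z.1
      rw [Prod.fst_add, map_add, LinearMap.add_apply]
  lie_add x y z := by
    refine Prod.ext ?_ ?_
    · show ⁅x.1, (y + z).1⁆ = ⁅x.1, y.1⁆ + ⁅x.1, z.1⁆
      rw [Prod.fst_add, lie_add]
    · show tbbar F L x.1 (y + z).1 = tbbar F L x.1 y.1 + tbbar F L x.1 z.1
      rw [Prod.fst_add, map_add]
  lie_self x := by
    refine Prod.ext ?_ ?_
    · show ⁅x.1, x.1⁆ = (0 : L)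
      exact lie_self x.1
    · show tbbar F L x.1 x.1 = 0
      exact tbbar_self F L x.1
  leibniz_lie x y z := by
    refine Prod.ext ?_ ?_
    · show ⁅x.1, ⁅y.1, z.1⁆⁆ = ⁅⁅x.1, y.1⁆, z.1⁆ + ⁅y.1, ⁅x.1, z.1⁆⁆
      exact leibniz_lie x.1 y.1 z.1
    · show tbbar F L x.1 ⁅y.1, z.1⁆ = tbbar F L ⁅x.1, y.1⁆ z.1 + tbbar F L y.1 ⁅x.1, z.1⁆
      exact tbbar_leibniz F L x.1 y.1 z.1

noncomputable instance : LieAlgebra F (L × PQ F L) where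
  lie_smul t x y := by
    refine Prod.ext ?_ ?_
    · show ⁅x.1, (t • y).1⁆ = t • ⁅x.1, y.1⁆
      rw [Prod.smul_fst, lie_smul]
    · show tbbar F L x.1 (t • y).1 = t • tbbar F L x.1 y.1
      rw [Prod.smul_fst, (tbbar F L x.1).map_smul]

@[simp] theorem tt_bracket_fst' (x y : L × PQ F L) : ⁅x, y⁆.1 = ⁅x.1, y.1⁆ := rfl
@[simp] theorem tt_bracket_snd' (x y : L × PQ F L) : ⁅x, y⁆.2 = tbbar F L x.1 y.1 := rfl

/-- The lift of `a ↦ (a, 0)` to the free Lie algebra. -/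
noncomputable def theta : FreeLieAlgebra F L →ₗ⁅F⁆ (L × PQ F L) :=
  FreeLieAlgebra.lift F (fun a => ((a, 0) : L × PQ F L))

theorem theta_of (a : L) : theta F L (FreeLieAlgebra.of F a) = (a, 0) :=
  FreeLieAlgebra.lift_of_apply _ _

/-- First projection as a Lie algebra morphism. -/
noncomputable def fstHom : (L × PQ F L) →ₗ⁅F⁆ L :=
  { LinearMap.fst F L (PQ F L) with map_lie' := fun {_ _} => rfl }

theorem theta_fst (x : FreeLieAlgebra F L) : (theta F L x).1 = presHom F L x := by
  have hcomp : (fstHom F L).comp (theta F L) = presHom F L := by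
    apply (FreeLieAlgebra.lift F).symm.injective
    rw [show presHom F L = FreeLieAlgebra.lift F (id : L → L) from rfl,
      Equiv.symm_apply_apply, FreeLieAlgebra.lift_symm_apply]
    funext a
    show fstHom F L (theta F L (FreeLieAlgebra.of F a)) = a
    rw [theta_of]
    rfl
  calc (theta F L x).1 = (fstHom F L).comp (theta F L) x := rfl
    _ = presHom F L x := by rw [hcomp]

theorem theta_lie_R {r : FreeLieAlgebra F L} (hr : r ∈ presKer F L) (y : FreeLieAlgebra F L) :
    theta F L ⁅r, y⁆ = 0 := by
  rw [LieHom.map_lie]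
  refine Prod.ext ?_ ?_
  · show ⁅(theta F L r).1, (theta F L y).1⁆ = (0 : L)
    rw [theta_fst, (mem_presKer F L).mp hr, zero_lie]
  · show tbbar F L (theta F L r).1 (theta F L y).1 = 0
    rw [theta_fst, (mem_presKer F L).mp hr, map_zero, LinearMap.zero_apply]

/-- Second projection composed with `theta`. -/
noncomputable def sndTheta : FreeLieAlgebra F L →ₗ[F] PQ F L :=
  LinearMap.snd F L (PQ F L) ∘ₗ (theta F L).toLinearMap

theorem TT'_le_ker_sndTheta : TT' F L ≤ LinearMap.ker (sndTheta F L) := by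
  rw [show (TT' F L : Submodule F (FreeLieAlgebra F L)) =
    Submodule.span F {m | ∃ x ∈ presKer F L, ∃ n ∈ (⊤ : LieIdeal F (FreeLieAlgebra F L)),
      ⁅x, n⁆ = m} from LieSubmodule.lieIdeal_oper_eq_linear_span' .., Submodule.span_le]
  rintro z ⟨r, hr, y, -, rfl⟩
  rw [SetLike.mem_coe, LinearMap.mem_ker, sndTheta, LinearMap.comp_apply]
  rw [show (theta F L).toLinearMap ⁅r, y⁆ = theta F L ⁅r, y⁆ from rfl, theta_lie_R F L hr y]
  rfl

/-- The retraction `δ : F²/[R,F] → (L⊗L)/⟨a⊗a⟩`. -/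
noncomputable def deltaMap : QT F L →ₗ[F] PQ F L :=
  Submodule.liftQ _ (sndTheta F L ∘ₗ (S2 F L).subtype)
    (by
      intro x hx
      rw [LinearMap.mem_ker, LinearMap.comp_apply]
      exact TT'_le_ker_sndTheta F L (Submodule.mem_comap.mp hx))

theorem deltaMap_qmk (x : FreeLieAlgebra F L) (hx : x ∈ S2 F L) :
    deltaMap F L (qmk F L x hx) = sndTheta F L x := rfl

theorem deltaMap_beta_tmk (h2 : LieModule.lowerCentralSeries F L L 2 = ⊥) (a c : L) :
    deltaMap F L (betaMap F L h2 (tmk F L a c)) = (Ksq F L).mkQ (tmk F L a c) := by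
  rw [betaMap_tmk, deltaMap_qmk, sndTheta, LinearMap.comp_apply]
  rw [show (theta F L).toLinearMap ⁅FreeLieAlgebra.of F a, FreeLieAlgebra.of F c⁆ =
    theta F L ⁅FreeLieAlgebra.of F a, FreeLieAlgebra.of F c⁆ from rfl]
  rw [LieHom.map_lie, theta_of, theta_of]
  show tbbar F L a c = (Ksq F L).mkQ (tmk F L a c)
  rfl

theorem Ksq_le_ker_beta (h2 : LieModule.lowerCentralSeries F L L 2 = ⊥) :
    Ksq F L ≤ LinearMap.ker (betaMap F L h2) := by
  rw [Ksq, Submodule.span_le]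
  rintro x ⟨a, rfl⟩
  rw [SetLike.mem_coe, LinearMap.mem_ker, betaMap_tmk, qmk_eq_zero_iff]
  rw [lie_self]
  exact Submodule.zero_mem _

/-- The induced map `(L⊗L)/⟨a⊗a⟩ → F²/[R,F]`. -/
noncomputable def betaBar (h2 : LieModule.lowerCentralSeries F L L 2 = ⊥) :
    PQ F L →ₗ[F] QT F L :=
  Submodule.liftQ _ (betaMap F L h2) (Ksq_le_ker_beta F L h2)

theorem betaBar_mkQ (h2 : LieModule.lowerCentralSeries F L L 2 = ⊥) (v : NTensor F L) :
    betaBar F L h2 ((Ksq F L).mkQ v) = betaMap F L h2 v := rfl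

theorem delta_comp_beta (h2 : LieModule.lowerCentralSeries F L L 2 = ⊥) :
    deltaMap F L ∘ₗ betaMap F L h2 = (Ksq F L).mkQ := by
  apply LinearMap.ext_on (span_tmk_eq_top F L)
  rintro x ⟨p, rfl⟩
  rw [LinearMap.comp_apply]
  exact deltaMap_beta_tmk F L h2 p.1 p.2

theorem betaBar_injective (h2 : LieModule.lowerCentralSeries F L L 2 = ⊥) :
    Function.Injective (betaBar F L h2) := by
  rw [← LinearMap.ker_eq_bot, Submodule.eq_bot_iff]
  intro p hp
  obtain ⟨v, rfl⟩ := Submodule.mkQ_surjective (Ksq F L) p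
  rw [LinearMap.mem_ker, betaBar_mkQ] at hp
  have := congrArg (deltaMap F L) hp
  rw [← LinearMap.comp_apply, delta_comp_beta F L h2, map_zero] at this
  exact this


theorem mem_S2_of_span {v : FreeLieAlgebra F L}
    (hv : v ∈ Submodule.span F {m : FreeLieAlgebra F L |
      ∃ x ∈ (⊤ : LieIdeal F (FreeLieAlgebra F L)),
        ∃ n ∈ (⊤ : LieIdeal F (FreeLieAlgebra F L)), ⁅x, n⁆ = m}) : v ∈ S2 F L := by
  rw [show (S2 F L : Submodule F (FreeLieAlgebra F L)) =
    Submodule.span F {m : FreeLieAlgebra F L | ∃ x ∈ (⊤ : LieIdeal F (FreeLieAlgebra F L)),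
      ∃ n ∈ (⊤ : LieIdeal F (FreeLieAlgebra F L)), ⁅x, n⁆ = m}
    from derived_coe_span F (FreeLieAlgebra F L)]
  exact hv

theorem betaMap_surjective (h2 : LieModule.lowerCentralSeries F L L 2 = ⊥) :
    Function.Surjective (betaMap F L h2) := by
  have claim : ∀ v, v ∈ S2 F L → ∀ hv : v ∈ S2 F L,
      ∃ nt, betaMap F L h2 nt = qmk F L v hv := by
    intro v hv
    rw [show (S2 F L : Submodule F (FreeLieAlgebra F L)) =
      Submodule.span F {m | ∃ x ∈ (⊤ : LieIdeal F (FreeLieAlgebra F L)),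
        ∃ n ∈ (⊤ : LieIdeal F (FreeLieAlgebra F L)), ⁅x, n⁆ = m}
      from derived_coe_span F (FreeLieAlgebra F L)] at hv
    induction hv using Submodule.span_induction with
    | mem z hz =>
        obtain ⟨x, -, y, -, rfl⟩ := hz
        intro hv
        refine ⟨tmk F L (presHom F L x) (presHom F L y), ?_⟩
        rw [betaMap_tmk, qmk_eq_iff]
        have key : ⁅FreeLieAlgebra.of F (presHom F L x), FreeLieAlgebra.of F (presHom F L y)⁆ -
            ⁅x, y⁆ = -(⁅x - FreeLieAlgebra.of F (presHom F L x), y⁆ +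
              ⁅FreeLieAlgebra.of F (presHom F L x), y - FreeLieAlgebra.of F (presHom F L y)⁆) := by
          rw [sub_lie, lie_sub]
          abel
        rw [key]
        exact Submodule.neg_mem _ (Submodule.add_mem _
          (memT_left (memR_sub_of F L x) y)
          (memT_right (memR_sub_of F L y) (FreeLieAlgebra.of F (presHom F L x))))
    | zero =>
        intro hv
        refine ⟨0, ?_⟩
        rw [map_zero, qmk, show (⟨(0 : FreeLieAlgebra F L), hv⟩ : S2 F L) = 0 from rfl,
          Submodule.Quotient.mk_zero]
    | add x y hx hy ihx ihy =>
        intro hv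
        have hxS : x ∈ S2 F L := mem_S2_of_span F L hx
        have hyS : y ∈ S2 F L := mem_S2_of_span F L hy
        obtain ⟨n1, hn1⟩ := ihx hxS
        obtain ⟨n2, hn2⟩ := ihy hyS
        refine ⟨n1 + n2, ?_⟩
        rw [map_add, hn1, hn2, ← qmk_add hxS hyS]
    | smul t x hx ihx =>
        intro hv
        have hxS : x ∈ S2 F L := mem_S2_of_span F L hx
        obtain ⟨n1, hn1⟩ := ihx hxS
        refine ⟨t • n1, ?_⟩
        rw [(betaMap F L h2).map_smul, hn1, ← qmk_smul t hxS]
  intro q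
  obtain ⟨s, rfl⟩ := Submodule.Quotient.mk_surjective _ q
  exact claim s.1 s.2 s.2

theorem betaBar_surjective (h2 : LieModule.lowerCentralSeries F L L 2 = ⊥) :
    Function.Surjective (betaBar F L h2) := by
  intro q
  obtain ⟨v, hv⟩ := betaMap_surjective F L h2 q
  exact ⟨(Ksq F L).mkQ v, hv⟩

/-- `(L⊗L)/⟨a⊗a⟩ ≃ F²/[R,F]` for class-two `L`. -/
noncomputable def pqEquivQT (h2 : LieModule.lowerCentralSeries F L L 2 = ⊥) :
    PQ F L ≃ₗ[F] QT F L :=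
  LinearEquiv.ofBijective (betaBar F L h2) ⟨betaBar_injective F L h2, betaBar_surjective F L h2⟩

end Delta
section Mult

theorem presHom_surjective : Function.Surjective (presHom F L) :=
  fun a => ⟨FreeLieAlgebra.of F a, presHom_of F L a⟩

/-- `R ∩ F²` as a submodule. -/
noncomputable abbrev S1 : Submodule F (FreeLieAlgebra F L) :=
  (presKer F L ⊓ derivedSeries F (FreeLieAlgebra F L) 1).toSubmodule

/-- `[R,F] ∩ (R∩F²)` inside `R ∩ F²`. -/
noncomputable abbrev N1 : Submodule F ↥(S1 F L) :=
  Submodule.comap (S1 F L).subtype (TT' F L)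

theorem S1_le_S2 : S1 F L ≤ S2 F L := by
  intro x hx
  have : x ∈ presKer F L ⊓ derivedSeries F (FreeLieAlgebra F L) 1 := hx
  exact ((LieSubmodule.mem_inf _ _ _).mp this).2

theorem S1_le_R {x : FreeLieAlgebra F L} (hx : x ∈ S1 F L) : x ∈ presKer F L := by
  have : x ∈ presKer F L ⊓ derivedSeries F (FreeLieAlgebra F L) 1 := hx
  exact ((LieSubmodule.mem_inf _ _ _).mp this).1

theorem TT'_le_R {x : FreeLieAlgebra F L} (hx : x ∈ TT' F L) : x ∈ presKer F L := by
  have h := LieSubmodule.lie_le_left (presKer F L) (⊤ : LieIdeal F (FreeLieAlgebra F L))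
  exact h hx

/-- The inclusion-induced map `R∩F² → F²/[R,F]`. -/
noncomputable def muMap : ↥(S1 F L) →ₗ[F] QT F L :=
  (Submodule.comap (S2 F L).subtype (TT' F L)).mkQ ∘ₗ Submodule.inclusion (S1_le_S2 F L)

theorem muMap_apply (x : ↥(S1 F L)) :
    muMap F L x = qmk F L x.1 (S1_le_S2 F L x.2) := rfl

theorem ker_muMap : LinearMap.ker (muMap F L) = N1 F L := by
  ext x
  rw [LinearMap.mem_ker, muMap_apply, qmk_eq_zero_iff]
  exact Iff.rfl

/-- The map `ν : M(L) → F²/[R,F]`. -/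
noncomputable def nuMap : Multiplier F L →ₗ[F] QT F L :=
  Submodule.liftQ (N1 F L) (muMap F L) (le_of_eq (ker_muMap F L).symm)

theorem nuMap_mk (x : ↥(S1 F L)) :
    nuMap F L (Submodule.Quotient.mk x) = qmk F L x.1 (S1_le_S2 F L x.2) := rfl

theorem nuMap_injective : Function.Injective (nuMap F L) := by
  rw [← LinearMap.ker_eq_bot]
  exact Submodule.ker_liftQ_eq_bot _ _ _ (le_of_eq (ker_muMap F L))

theorem presHom_mem_derived {x : FreeLieAlgebra F L} (hx : x ∈ S2 F L) :
    presHom F L x ∈ derivedSeries F L 1 := by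
  have hx' : x ∈ derivedSeries F (FreeLieAlgebra F L) 1 := hx
  have : presHom F L x ∈ LieIdeal.map (presHom F L)
      (derivedSeries F (FreeLieAlgebra F L) 1) := LieIdeal.mem_map hx'
  rwa [LieIdeal.derivedSeries_map_eq 1 (presHom_surjective F L)] at this

/-- The map `F² → L²` induced by the presentation. -/
noncomputable def phi0 : ↥(S2 F L) →ₗ[F] ↥(derivedSeries F L 1) where
  toFun x := ⟨presHom F L x.1, presHom_mem_derived F L x.2⟩
  map_add' x y := by
    apply Subtype.ext
    show presHom F L (x.1 + y.1) = presHom F L x.1 + presHom F L y.1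
    rw [map_add]
  map_smul' t x := by
    apply Subtype.ext
    show presHom F L (t • x.1) = t • presHom F L x.1
    rw [map_smul]

/-- The map `F²/[R,F] → L²`. -/
noncomputable def phiMap : QT F L →ₗ[F] ↥(derivedSeries F L 1) :=
  Submodule.liftQ _ (phi0 F L)
    (by
      intro x hx
      rw [LinearMap.mem_ker]
      apply Subtype.ext
      show presHom F L x.1 = 0
      exact (mem_presKer F L).mp (TT'_le_R F L (Submodule.mem_comap.mp hx)))

theorem phiMap_qmk (x : FreeLieAlgebra F L) (hx : x ∈ S2 F L) :
    phiMap F L (qmk F L x hx) = ⟨presHom F L x, presHom_mem_derived F L hx⟩ := rfl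

theorem ker_phiMap : LinearMap.ker (phiMap F L) = LinearMap.range (nuMap F L) := by
  ext q
  obtain ⟨s, rfl⟩ := Submodule.Quotient.mk_surjective _ q
  constructor
  · intro hq
    rw [LinearMap.mem_ker] at hq
    have hR : s.1 ∈ presKer F L := by
      rw [mem_presKer]
      exact congrArg Subtype.val hq
    have hS1 : s.1 ∈ S1 F L := by
      show s.1 ∈ presKer F L ⊓ derivedSeries F (FreeLieAlgebra F L) 1
      rw [LieSubmodule.mem_inf]
      exact ⟨hR, s.2⟩
    refine ⟨Submodule.Quotient.mk (⟨s.1, hS1⟩ : ↥(S1 F L)), ?_⟩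
    rw [nuMap_mk, qmk]
  · rintro ⟨y, hy⟩
    obtain ⟨z, rfl⟩ := Submodule.Quotient.mk_surjective _ y
    rw [LinearMap.mem_ker, ← hy, nuMap_mk, phiMap_qmk]
    apply Subtype.ext
    show presHom F L z.1 = 0
    exact (mem_presKer F L).mp (S1_le_R F L z.2)

theorem mem_D_of_span {v : L}
    (hv : v ∈ Submodule.span F {m : L | ∃ x ∈ (⊤ : LieIdeal F L),
      ∃ n ∈ (⊤ : LieIdeal F L), ⁅x, n⁆ = m}) : v ∈ derivedSeries F L 1 := by
  rw [← LieSubmodule.mem_toSubmodule, show ((derivedSeries F L 1).toSubmodule : Submodule F L) =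
    Submodule.span F {m : L | ∃ x ∈ (⊤ : LieIdeal F L), ∃ n ∈ (⊤ : LieIdeal F L), ⁅x, n⁆ = m}
    from derived_coe_span F L]
  exact hv

theorem phiMap_surjective : Function.Surjective (phiMap F L) := by
  have claim : ∀ v, v ∈ Submodule.span F {m : L | ∃ x ∈ (⊤ : LieIdeal F L),
      ∃ n ∈ (⊤ : LieIdeal F L), ⁅x, n⁆ = m} →
      ∀ hv : v ∈ derivedSeries F L 1, ∃ q, phiMap F L q = ⟨v, hv⟩ := by
    intro v hv
    induction hv using Submodule.span_induction with
    | mem z hz =>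
        obtain ⟨x, -, y, -, rfl⟩ := hz
        intro hv
        refine ⟨qmk F L ⁅FreeLieAlgebra.of F x, FreeLieAlgebra.of F y⁆ (br_mem_S2 F L _ _), ?_⟩
        rw [phiMap_qmk]
        apply Subtype.ext
        show presHom F L ⁅FreeLieAlgebra.of F x, FreeLieAlgebra.of F y⁆ = ⁅x, y⁆
        rw [LieHom.map_lie, presHom_of, presHom_of]
    | zero =>
        intro hv
        refine ⟨0, ?_⟩
        rw [map_zero]
        exact Subtype.ext rfl
    | add x y hx hy ihx ihy =>
        intro hv
        obtain ⟨q1, hq1⟩ := ihx (mem_D_of_span F L hx)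
        obtain ⟨q2, hq2⟩ := ihy (mem_D_of_span F L hy)
        refine ⟨q1 + q2, ?_⟩
        rw [map_add, hq1, hq2]
        apply Subtype.ext
        rfl
    | smul t x hx ihx =>
        intro hv
        obtain ⟨q1, hq1⟩ := ihx (mem_D_of_span F L hx)
        refine ⟨t • q1, ?_⟩
        rw [(phiMap F L).map_smul, hq1]
        apply Subtype.ext
        rfl
  intro d
  have hd : d.1 ∈ derivedSeries F L 1 := d.2
  have hd' : d.1 ∈ Submodule.span F {m : L | ∃ x ∈ (⊤ : LieIdeal F L),
      ∃ n ∈ (⊤ : LieIdeal F L), ⁅x, n⁆ = m} := by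
    rw [← derived_coe_span F L]
    exact hd
  obtain ⟨q, hq⟩ := claim d.1 hd' d.2
  exact ⟨q, by rw [hq]⟩

/-- `F²/[R,F] ≃ M(L) × L²`. -/
noncomputable def qtEquiv : QT F L ≃ₗ[F] (Multiplier F L × ↥(derivedSeries F L 1)) := by
  have hex := (LinearMap.range (nuMap F L)).exists_isCompl
  set C := hex.choose with hCdef
  have hC : IsCompl (LinearMap.range (nuMap F L)) C := hex.choose_spec
  have eMult : Multiplier F L ≃ₗ[F] ↥(LinearMap.range (nuMap F L)) :=
    LinearEquiv.ofInjective _ (nuMap_injective F L)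
  have eC : ↥C ≃ₗ[F] (QT F L ⧸ LinearMap.range (nuMap F L)) :=
    (Submodule.quotientEquivOfIsCompl _ _ hC).symm
  have eQuot : (QT F L ⧸ LinearMap.range (nuMap F L)) ≃ₗ[F] ↥(derivedSeries F L 1) :=
    (Submodule.quotEquivOfEq _ _ (ker_phiMap F L).symm).trans
      ((phiMap F L).quotKerEquivOfSurjective (phiMap_surjective F L))
  exact (Submodule.prodEquivOfIsCompl _ _ hC).symm.trans
    (LinearEquiv.prodCongr eMult.symm (eC.trans eQuot))

end Mult
section Sigma

/-- The abelianization quotient map as a linear map. -/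
noncomputable def mkA : L →ₗ[F] AbQuot F L :=
  (derivedSeries F L 1).toSubmodule.mkQ

theorem mkA_eq_zero_iff {x : L} : mkA F L x = 0 ↔ x ∈ derivedSeries F L 1 :=
  Iff.trans
    (show mkA F L x = 0 ↔
      Submodule.Quotient.mk (p := (derivedSeries F L 1).toSubmodule) x = 0 from Iff.rfl)
    (by rw [Submodule.Quotient.mk_eq_zero, LieSubmodule.mem_toSubmodule])

theorem mkA_lie (x y : L) : mkA F L ⁅x, y⁆ = 0 :=
  (mkA_eq_zero_iff F L).mpr (lie_mem_derived_one F x y)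

/-- The bilinear map `(a, c) ↦ ā ⊗ c̄` into `A ⊗ A`. -/
noncomputable def bS : L →ₗ[F] L →ₗ[F] TensorProduct F (AbQuot F L) (AbQuot F L) :=
  (TensorProduct.mk F (AbQuot F L) (AbQuot F L)).compl₁₂ (mkA F L) (mkA F L)

theorem bS_apply (a c : L) : bS F L a c = mkA F L a ⊗ₜ[F] mkA F L c := rfl

theorem bS_rel5 (a a' c : L) : bS F L ⁅a, a'⁆ c = bS F L a ⁅a', c⁆ - bS F L a' ⁅a, c⁆ := by
  rw [bS_apply, bS_apply, bS_apply, mkA_lie, mkA_lie, mkA_lie, TensorProduct.zero_tmul,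
    TensorProduct.tmul_zero, TensorProduct.tmul_zero, sub_zero]

theorem bS_rel6 (a c c' : L) : bS F L a ⁅c, c'⁆ = bS F L ⁅c', a⁆ c - bS F L ⁅c, a⁆ c' := by
  rw [bS_apply, bS_apply, bS_apply, mkA_lie, mkA_lie, mkA_lie, TensorProduct.tmul_zero,
    TensorProduct.zero_tmul, TensorProduct.zero_tmul, sub_zero]

theorem bS_rel7 (a c a' c' : L) : bS F L ⁅c, a⁆ ⁅a', c'⁆ = 0 := by
  rw [bS_apply, mkA_lie, TensorProduct.zero_tmul]

/-- The map `σ : L ⊗ L → A ⊗ A`. -/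
noncomputable def sigmaMap : NTensor F L →ₗ[F] TensorProduct F (AbQuot F L) (AbQuot F L) :=
  tLift (bS F L) (bS_rel5 F L) (bS_rel6 F L) (bS_rel7 F L)

theorem sigmaMap_tmk (a c : L) :
    sigmaMap F L (tmk F L a c) = mkA F L a ⊗ₜ[F] mkA F L c :=
  tLift_tmk _ _ _ _ a c

theorem tmk_zero_left (w : L) : tmk F L 0 w = 0 := by
  rw [← tb_apply, map_zero, LinearMap.zero_apply]

theorem tmk_zero_right (w : L) : tmk F L w 0 = 0 :=
  map_zero (tb F L w)

end Sigma

theorem card_sym_fin (m : ℕ) :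
    Fintype.card {p : Fin m × Fin m // p.1 ≤ p.2} = m * (m + 1) / 2 := by
  have e : {p : Fin m × Fin m // p.1 ≤ p.2} ≃ Σ j : Fin m, {i : Fin m // i ≤ j} :=
    { toFun := fun p => ⟨p.1.2, ⟨p.1.1, p.2⟩⟩
      invFun := fun s => ⟨(s.2.1, s.1), s.2.2⟩
      left_inv := fun p => rfl
      right_inv := fun s => rfl }
  have e2 : ∀ j : Fin m, {i : Fin m // i ≤ j} ≃ Fin (j.1 + 1) := fun j =>
    { toFun := fun i => ⟨i.1.1, Nat.lt_succ_of_le i.2⟩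
      invFun := fun k => ⟨⟨k.1, lt_of_le_of_lt (Nat.le_of_lt_succ k.2) j.2⟩,
        by rw [Fin.le_def]; exact Nat.le_of_lt_succ k.2⟩
      left_inv := fun i => by apply Subtype.ext; apply Fin.ext; rfl
      right_inv := fun k => by apply Fin.ext; rfl }
  rw [Fintype.card_congr e, Fintype.card_sigma]
  have h1 : ∀ j : Fin m, Fintype.card {i : Fin m // i ≤ j} = j.1 + 1 := fun j => by
    rw [Fintype.card_congr (e2 j), Fintype.card_fin]
  calc (∑ j : Fin m, Fintype.card {i : Fin m // i ≤ j})
      = ∑ j : Fin m, (j.1 + 1) := Finset.sum_congr rfl (fun j _ => h1 j)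
    _ = ∑ k ∈ Finset.range m, (k + 1) := Fin.sum_univ_eq_sum_range _ m
    _ = ∑ k ∈ Finset.range (m + 1), k := by
        rw [Finset.sum_range_succ' (fun k => k) m, add_zero]
    _ = (m + 1) * m / 2 := by rw [Finset.sum_range_id (m + 1)]; simp
    _ = m * (m + 1) / 2 := by rw [Nat.mul_comm]

theorem ksq_equiv_abelian [FiniteDimensional F L]
    (h2 : LieModule.lowerCentralSeries F L L 2 = ⊥) {m : ℕ}
    (hm : Module.finrank F (AbQuot F L) = m) :
    Nonempty (↥(Ksq F L) ≃ₗ[F] AbLie F (m * (m + 1) / 2)) := by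
  haveI : Module.Finite F (NTensor F L) := ntensor_finite F L
  set bA := Module.finBasisOfFinrankEq F (AbQuot F L) hm with hbA
  have hsur := Submodule.Quotient.mk_surjective ((derivedSeries F L 1).toSubmodule)
  set a : Fin m → L := fun i => (hsur (bA i)).choose with ha
  have haspec : ∀ i, mkA F L (a i) = bA i := fun i => (hsur (bA i)).choose_spec
  set fam : {p : Fin m × Fin m // p.1 ≤ p.2} → NTensor F L := fun p =>
    if p.1.1 = p.1.2 then tmk F L (a p.1.1) (a p.1.1)
    else tmk F L (a p.1.1) (a p.1.2) + tmk F L (a p.1.2) (a p.1.1) with hfam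
  have hfam_diag : ∀ (i : Fin m) (h : (i, i).1 ≤ (i, i).2),
      fam ⟨(i, i), h⟩ = tmk F L (a i) (a i) := fun i h => if_pos rfl
  have hfam_off : ∀ (i j : Fin m) (h : i ≤ j) (hne : i ≠ j),
      fam ⟨(i, j), h⟩ = tmk F L (a i) (a j) + tmk F L (a j) (a i) := fun i j h hne =>
    if_neg hne
  have hC1 : ∀ v ∈ Submodule.span F (Set.range a), ∀ w ∈ Submodule.span F (Set.range a),
      tmk F L v w + tmk F L w v ∈ Submodule.span F (Set.range fam) := by
    intro v hv w hw
    induction hv, hw using Submodule.span_induction₂ with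
    | mem_mem u1 u2 hu1 hu2 =>
        obtain ⟨i, rfl⟩ := hu1; obtain ⟨j, rfl⟩ := hu2
        rcases le_or_gt i j with hle | hlt
        · rcases eq_or_ne i j with rfl | hne
          · rw [← hfam_diag i le_rfl]
            exact Submodule.add_mem _ (Submodule.subset_span ⟨_, rfl⟩)
              (Submodule.subset_span ⟨_, rfl⟩)
          · rw [← hfam_off i j hle hne]
            exact Submodule.subset_span ⟨_, rfl⟩
        · rw [add_comm, ← hfam_off j i (le_of_lt hlt) (ne_of_lt hlt)]
          exact Submodule.subset_span ⟨_, rfl⟩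
    | zero_left w hw => rw [tmk_zero_left, tmk_zero_right, add_zero]; exact Submodule.zero_mem _
    | zero_right v hv => rw [tmk_zero_left, tmk_zero_right, add_zero]; exact Submodule.zero_mem _
    | add_left v1 v2 w h1 h2 hw ih1 ih2 =>
        have heq : tmk F L (v1 + v2) w + tmk F L w (v1 + v2) =
            (tmk F L v1 w + tmk F L w v1) + (tmk F L v2 w + tmk F L w v2) := by
          rw [tmk_add_left, tmk_add_right]; abel
        rw [heq]; exact Submodule.add_mem _ ih1 ih2
    | add_right v w1 w2 hv h1 h2 ih1 ih2 =>
        have heq : tmk F L v (w1 + w2) + tmk F L (w1 + w2) v =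
            (tmk F L v w1 + tmk F L w1 v) + (tmk F L v w2 + tmk F L w2 v) := by
          rw [tmk_add_left, tmk_add_right]; abel
        rw [heq]; exact Submodule.add_mem _ ih1 ih2
    | smul_left t v w hv hw ih =>
        have heq : tmk F L (t • v) w + tmk F L w (t • v) =
            t • (tmk F L v w + tmk F L w v) := by
          rw [tmk_smul_left, tmk_smul_right, smul_add]
        rw [heq]; exact Submodule.smul_mem _ t ih
    | smul_right t v w hv hw ih =>
        have heq : tmk F L v (t • w) + tmk F L (t • w) v =
            t • (tmk F L v w + tmk F L w v) := by
          rw [tmk_smul_left, tmk_smul_right, smul_add]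
        rw [heq]; exact Submodule.smul_mem _ t ih
  have hC2 : ∀ v ∈ Submodule.span F (Set.range a),
      tmk F L v v ∈ Submodule.span F (Set.range fam) := by
    intro v hv
    induction hv using Submodule.span_induction with
    | mem x hx =>
        obtain ⟨i, rfl⟩ := hx
        rw [← hfam_diag i le_rfl]
        exact Submodule.subset_span ⟨_, rfl⟩
    | zero => rw [tmk_zero_left]; exact Submodule.zero_mem _
    | add x y hx hy ihx ihy =>
        have heq : tmk F L (x + y) (x + y) =
            tmk F L x x + tmk F L y y + (tmk F L x y + tmk F L y x) := by
          rw [tmk_add_left, tmk_add_right, tmk_add_right]; abel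
        rw [heq]
        exact Submodule.add_mem _ (Submodule.add_mem _ ihx ihy) (hC1 x hx y hy)
    | smul t x hx ihx =>
        have heq : tmk F L (t • x) (t • x) = t • (t • tmk F L x x) := by
          rw [tmk_smul_left, tmk_smul_right]
        rw [heq]; exact Submodule.smul_mem _ t (Submodule.smul_mem _ t ihx)
  have hspan : Ksq F L = Submodule.span F (Set.range fam) := by
    apply le_antisymm
    · rw [Ksq, Submodule.span_le]
      rintro x ⟨x0, rfl⟩
      set c : Fin m → F := fun i => bA.repr (mkA F L x0) i with hc
      set x' : L := ∑ i, c i • a i with hx'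
      have hmkx' : mkA F L x' = mkA F L x0 := by
        rw [hx', map_sum]
        simp_rw [LinearMap.map_smul, haspec]
        exact bA.sum_repr (mkA F L x0)
      have hdiff : x0 - x' ∈ derivedSeries F L 1 := by
        rw [← mkA_eq_zero_iff, map_sub, hmkx', sub_self]
      have heq : tmk F L x0 x0 = tmk F L x' x' := by
        have h := tmk_sq_congr h2 x' hdiff
        rw [show x' + (x0 - x') = x0 from by abel] at h
        exact h
      have hx'mem : x' ∈ Submodule.span F (Set.range a) :=
        Submodule.sum_mem _ fun i _ =>
          Submodule.smul_mem _ _ (Submodule.subset_span ⟨i, rfl⟩)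
      rw [SetLike.mem_coe, heq]
      exact hC2 x' hx'mem
    · rw [Submodule.span_le]
      rintro x ⟨p, rfl⟩
      rcases p with ⟨⟨i, j⟩, hij⟩
      rw [SetLike.mem_coe]
      by_cases hd : i = j
      · subst hd
        rw [hfam_diag i hij]
        exact Submodule.subset_span ⟨a i, rfl⟩
      · rw [hfam_off i j hij hd]
        have hexp : tmk F L (a i) (a j) + tmk F L (a j) (a i) =
            tmk F L (a i + a j) (a i + a j) - tmk F L (a i) (a i) - tmk F L (a j) (a j) := by
          rw [tmk_add_left, tmk_add_right, tmk_add_right]; abel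
        rw [hexp]
        exact Submodule.sub_mem _ (Submodule.sub_mem _
          (Submodule.subset_span ⟨a i + a j, rfl⟩) (Submodule.subset_span ⟨a i, rfl⟩))
          (Submodule.subset_span ⟨a j, rfl⟩)
  have hval : ∀ (k l : Fin m) (h : k ≤ l), (⇑(sigmaMap F L) ∘ fam) ⟨(k, l), h⟩ =
      if k = l then (bA.tensorProduct bA) (k, k)
      else (bA.tensorProduct bA) (k, l) + (bA.tensorProduct bA) (l, k) := by
    intro k l h
    by_cases hd : k = l
    · subst hd
      rw [if_pos rfl, Function.comp_apply, hfam_diag k h, sigmaMap_tmk, haspec,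
        Module.Basis.tensorProduct_apply]
    · rw [if_neg hd, Function.comp_apply, hfam_off k l h hd, map_add, sigmaMap_tmk,
        sigmaMap_tmk, haspec, haspec, Module.Basis.tensorProduct_apply, Module.Basis.tensorProduct_apply]
  have hind : LinearIndependent F fam := by
    apply LinearIndependent.of_comp (sigmaMap F L)
    rw [Fintype.linearIndependent_iff]
    intro g hg p₀
    rcases p₀ with ⟨⟨i, j⟩, hij⟩
    have hg' := congrArg ((bA.tensorProduct bA).coord (i, j)) hg
    rw [map_sum, map_zero] at hg'
    rw [Finset.sum_eq_single (⟨(i, j), hij⟩ : {p : Fin m × Fin m // p.1 ≤ p.2})] at hg'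
    · rw [((bA.tensorProduct bA).coord (i, j)).map_smul, hval i j hij] at hg'
      by_cases hd : i = j
      · subst hd
        rw [if_pos rfl, Basis.coord_apply, Basis.repr_self, Finsupp.single_apply, if_pos rfl,
          smul_eq_mul, mul_one] at hg'
        exact hg'
      · rw [if_neg hd, map_add, Basis.coord_apply, Basis.coord_apply, Basis.repr_self,
          Basis.repr_self, Finsupp.single_apply, Finsupp.single_apply, if_pos rfl,
          if_neg (fun hcon => hd (by rw [Prod.mk.injEq] at hcon; exact hcon.1.symm)),
          add_zero, smul_eq_mul, mul_one] at hg'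
        exact hg'
    · intro p hp hne
      rcases p with ⟨⟨k, l⟩, hkl⟩
      rw [((bA.tensorProduct bA).coord (i, j)).map_smul, hval k l hkl]
      by_cases hd : k = l
      · subst hd
        rw [if_pos rfl, Basis.coord_apply, Basis.repr_self, Finsupp.single_apply]
        rw [if_neg (fun hcon => hne (Subtype.ext (by
          rw [Prod.mk.injEq] at hcon
          exact Prod.ext hcon.1 hcon.2)))]
        rw [smul_zero]
      · rw [if_neg hd, map_add, Basis.coord_apply, Basis.coord_apply, Basis.repr_self,
          Basis.repr_self, Finsupp.single_apply, Finsupp.single_apply]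
        rw [if_neg (fun hcon => hne (Subtype.ext (by
          rw [Prod.mk.injEq] at hcon
          exact Prod.ext hcon.1 hcon.2)))]
        rw [if_neg (fun hcon => by
          rw [Prod.mk.injEq] at hcon
          have hji : j ≤ i := by rw [← hcon.1, ← hcon.2]; exact hkl
          have hij' : i = j := le_antisymm hij hji
          exact hd (hcon.2.trans (hij'.symm.trans hcon.1.symm)))]
        rw [add_zero, smul_zero]
    · intro hn
      exact absurd (Finset.mem_univ _) hn
  have hfr : Module.finrank F ↥(Ksq F L) = m * (m + 1) / 2 := by
    rw [hspan, finrank_span_eq_card hind, card_sym_fin]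
  have hfr2 : Module.finrank F (AbLie F (m * (m + 1) / 2)) = m * (m + 1) / 2 :=
    Module.finrank_fin_fun F
  exact ⟨LinearEquiv.ofFinrankEq _ _ (by rw [hfr, hfr2])⟩
end Main
end TensorSq
/-- for class-two `L`, `L ⊗ L ≅ M(L) ⊕ L² ⊕ A(m(m+1)/2)`. -/
theorem tensor_square_of_class_two (F : Type u) [Field F]
    (L : Type u) [LieRing L] [LieAlgebra F L] [FiniteDimensional F L]
    (h2 : LieModule.lowerCentralSeries F L L 2 = ⊥) (m : ℕ)
    (hm : Module.finrank F (AbQuot F L) = m) :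
    Nonempty (NTensor F L ≃ₗ[F]
      (Multiplier F L × ↥(derivedSeries F L 1) × AbLie F (m * (m + 1) / 2))) := by
  haveI : Module.Finite F (NTensor F L) := TensorSq.ntensor_finite F L
  obtain ⟨eAb⟩ := TensorSq.ksq_equiv_abelian F L h2 hm
  obtain ⟨CK, hCK⟩ := Submodule.exists_isCompl (TensorSq.Ksq F L)
  have e1 : (↥(TensorSq.Ksq F L) × ↥CK) ≃ₗ[F] NTensor F L :=
    Submodule.prodEquivOfIsCompl _ _ hCK
  have e2 : ↥CK ≃ₗ[F] TensorSq.PQ F L := (Submodule.quotientEquivOfIsCompl _ _ hCK).symm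
  have e3 : TensorSq.PQ F L ≃ₗ[F] TensorSq.QT F L := TensorSq.pqEquivQT F L h2
  have e4 : TensorSq.QT F L ≃ₗ[F] (Multiplier F L × ↥(derivedSeries F L 1)) :=
    TensorSq.qtEquiv F L
  refine ⟨e1.symm.trans ((LinearEquiv.prodCongr eAb (e2.trans (e3.trans e4))).trans
    ((LinearEquiv.prodComm F _ _).trans (LinearEquiv.prodAssoc F _ _ _)))⟩
end

section
/- Let T be an n-dimensional stem nilpotent Lie algebra of class 3 with dim T² = 2. Then Z(T) = T³ is one-dimensional and T/Z(T) ≅ H(1) ⊕ A(n−4). -/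
open LieAlgebra Matrix Module


open LieAlgebra

open Matrix
open LieAlgebra

universe u v

/-- for a stem Lie algebra of class 3 with `dim T² = 2`,
`Z(T) = T³` is one-dimensional and `T/Z(T) ≅ H(1) ⊕ A(n-4)`. -/
theorem stem_class_three_center (F : Type u) [Field F]
    (T : Type u) [LieRing T] [LieAlgebra F T] [FiniteDimensional F T]
    (hstem : LieAlgebra.center F T ≤ derivedSeries F T 1)
    (h3 : LieModule.lowerCentralSeries F T T 3 = ⊥) (h2 : LieModule.lowerCentralSeries F T T 2 ≠ ⊥)
    (n : ℕ) (hn : Module.finrank F T = n)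
    (hd : Module.finrank F ↥(derivedSeries F T 1) = 2) :
    LieAlgebra.center F T = LieModule.lowerCentralSeries F T T 2 ∧
    Module.finrank F ↥(LieAlgebra.center F T) = 1 ∧
    Nonempty ((T ⧸ LieAlgebra.center F T) ≃ₗ⁅F⁆ (Heis F 1 × AbLie F (n - 4))) := by
  classical
  have hlcs1 : LieModule.lowerCentralSeries F T T 1 = derivedSeries F T 1 := by
    rw [LieModule.lowerCentralSeries_succ, LieAlgebra.derivedSeries_def,
      LieAlgebra.derivedSeriesOfIdeal_succ, LieAlgebra.derivedSeriesOfIdeal_zero]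
    rfl
  have hlcs2 : LieModule.lowerCentralSeries F T T 2 =
      ⁅(⊤ : LieIdeal F T), derivedSeries F T 1⁆ := by
    rw [LieModule.lowerCentralSeries_succ, hlcs1]
  have hlcs3 : LieModule.lowerCentralSeries F T T 3 =
      ⁅(⊤ : LieIdeal F T), LieModule.lowerCentralSeries F T T 2⁆ := by
    rw [LieModule.lowerCentralSeries_succ]
  have hne : LieModule.lowerCentralSeries F T T 2 ≠ derivedSeries F T 1 := by
    intro h
    apply h2
    have h32 : LieModule.lowerCentralSeries F T T 3 = LieModule.lowerCentralSeries F T T 2 := by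
      conv_lhs => rw [hlcs3, h]
      exact hlcs2.symm
    rw [← h32, h3]
  have hle : LieModule.lowerCentralSeries F T T 2 ≤ derivedSeries F T 1 := by
    rw [hlcs2]
    exact LieSubmodule.lie_le_right _ _
  have hd' : Module.finrank F ↥(LieSubmodule.toSubmodule (derivedSeries F T 1)) = 2 := hd
  have hfr2' : Module.finrank F
      ↥(LieSubmodule.toSubmodule (LieModule.lowerCentralSeries F T T 2)) = 1 := by
    have hlt : LieSubmodule.toSubmodule (LieModule.lowerCentralSeries F T T 2) <
        LieSubmodule.toSubmodule (derivedSeries F T 1) := by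
      refine lt_of_le_of_ne ?_ ?_
      · exact (LieSubmodule.toSubmodule_le_toSubmodule _ _).2 hle
      · intro h; exact hne ((LieSubmodule.toSubmodule_inj _ _).1 h)
    have h1 := Submodule.finrank_lt_finrank_of_lt hlt
    rw [hd'] at h1
    have h2' : Module.finrank F
        ↥(LieSubmodule.toSubmodule (LieModule.lowerCentralSeries F T T 2)) ≠ 0 := by
      intro h0
      apply h2
      have h0' : LieSubmodule.toSubmodule (LieModule.lowerCentralSeries F T T 2) = ⊥ :=
        Submodule.finrank_eq_zero.1 h0
      rw [← LieSubmodule.toSubmodule_inj] at *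
      simpa using h0'
    omega
  have hZle : LieModule.lowerCentralSeries F T T 2 ≤ LieAlgebra.center F T := by
    intro x hx
    rw [LieAlgebra.center, LieModule.mem_maxTrivSubmodule]
    intro y
    have hm : ⁅y, x⁆ ∈ LieModule.lowerCentralSeries F T T 3 := by
      rw [hlcs3]
      exact LieSubmodule.lie_mem_lie (LieSubmodule.mem_top y) hx
    rw [h3] at hm
    exact (LieSubmodule.mem_bot _).1 hm
  have hcne : LieAlgebra.center F T ≠ derivedSeries F T 1 := by
    intro h
    apply h2
    rw [hlcs2, ← h, LieSubmodule.lie_eq_bot_iff]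
    intro x _ m hm
    exact (LieModule.mem_maxTrivSubmodule F T T m).1 hm x
  have hZltD : LieSubmodule.toSubmodule (LieAlgebra.center F T) <
      LieSubmodule.toSubmodule (derivedSeries F T 1) := by
    refine lt_of_le_of_ne ((LieSubmodule.toSubmodule_le_toSubmodule _ _).2 hstem) ?_
    intro h; exact hcne ((LieSubmodule.toSubmodule_inj _ _).1 h)
  have hcfr : Module.finrank F ↥(LieSubmodule.toSubmodule (LieAlgebra.center F T)) ≤ 1 := by
    have h1 := Submodule.finrank_lt_finrank_of_lt hZltD
    rw [hd'] at h1
    omega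
  have hZeq : LieAlgebra.center F T = LieModule.lowerCentralSeries F T T 2 := by
    rw [← LieSubmodule.toSubmodule_inj]
    symm
    refine Submodule.eq_of_le_of_finrank_le
      ((LieSubmodule.toSubmodule_le_toSubmodule _ _).2 hZle) ?_
    rw [hfr2']
    exact hcfr
  have hZsub : LieSubmodule.toSubmodule (LieAlgebra.center F T) =
      LieSubmodule.toSubmodule (LieModule.lowerCentralSeries F T T 2) :=
    (LieSubmodule.toSubmodule_inj _ _).2 hZeq
  have hcfr1 : Module.finrank F ↥(LieSubmodule.toSubmodule (LieAlgebra.center F T)) = 1 := by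
    rw [hZsub]; exact hfr2'
  obtain ⟨z0, hz00, hz0span⟩ := finrank_eq_one_iff'.1 hcfr1
  obtain ⟨z, hzdef⟩ : ∃ z : T, z = (z0 : T) := ⟨_, rfl⟩
  have hz0 : z ≠ 0 := by
    intro h
    apply hz00
    apply Subtype.ext
    rw [← hzdef]
    exact h
  have hzZ : z ∈ LieAlgebra.center F T := by rw [hzdef]; exact z0.2
  have hzc : ∀ x : T, ⁅x, z⁆ = 0 := (LieModule.mem_maxTrivSubmodule F T T z).1 hzZ
  have hzc' : ∀ x : T, ⁅z, x⁆ = 0 := fun x => by rw [← lie_skew, hzc, neg_zero]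
  have hZspan : LieSubmodule.toSubmodule (LieAlgebra.center F T) = Submodule.span F {z} := by
    apply le_antisymm
    · intro x hx
      obtain ⟨c, hc⟩ := hz0span ⟨x, hx⟩
      rw [Submodule.mem_span_singleton]
      refine ⟨c, ?_⟩
      rw [hzdef]
      simpa using congrArg Subtype.val hc
    · rw [Submodule.span_le, Set.singleton_subset_iff]
      rw [hzdef]
      exact z0.2
  obtain ⟨w, hwD, hwZ⟩ := SetLike.exists_of_lt hZltD
  have li2 : LinearIndependent F ![z, w] := by
    rw [linearIndependent_fin2]
    constructor
    · show w ≠ 0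
      intro h; exact hwZ (h ▸ Submodule.zero_mem _)
    · intro a hza
      show False
      rcases eq_or_ne a 0 with rfl | ha
      · refine hz0 ?_
        have h0 := hza
        simp only [Matrix.cons_val_zero, Matrix.cons_val_one, Matrix.head_cons, zero_smul] at h0
        first
        | exact h0
        | exact h0.symm
      · apply hwZ
        rw [hZspan, Submodule.mem_span_singleton]
        refine ⟨a⁻¹, ?_⟩
        have hza' : z = a • w := by
          have h0 := hza
          simp only [Matrix.cons_val_zero, Matrix.cons_val_one, Matrix.head_cons] at h0
          first
          | exact h0
          | exact h0.symm
        rw [hza', smul_smul, inv_mul_cancel₀ ha, one_smul]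
  set W2 : Submodule F T := Submodule.span F (Set.range ![z, w]) with hW2def
  have hzW2 : z ∈ W2 := Submodule.subset_span ⟨0, rfl⟩
  have hwW2 : w ∈ W2 := Submodule.subset_span ⟨1, rfl⟩
  have hW2D : W2 ≤ LieSubmodule.toSubmodule (derivedSeries F T 1) := by
    rw [hW2def, Submodule.span_le]
    rintro x ⟨i, rfl⟩
    fin_cases i
    · have hzD : z ∈ LieSubmodule.toSubmodule (derivedSeries F T 1) := hstem hzZ
      simpa using hzD
    · simpa using hwD
  have hfrW2 : Module.finrank F ↥W2 = 2 := by
    rw [hW2def, finrank_span_eq_card li2]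
    simp
  have hW2eq : W2 = LieSubmodule.toSubmodule (derivedSeries F T 1) :=
    Submodule.eq_of_le_of_finrank_le hW2D (by rw [hfrW2, hd'])
  let bW : Basis (Fin 2) F ↥W2 := Basis.span li2
  obtain ⟨C, hC⟩ := Submodule.exists_isCompl W2
  let proj : T →ₗ[F] ↥W2 := W2.linearProjOfIsCompl C hC
  let p : T →ₗ[F] F := bW.coord 0 ∘ₗ proj
  let q : T →ₗ[F] F := bW.coord 1 ∘ₗ proj
  have hproj : ∀ (t : T) (ht : t ∈ W2), proj t = ⟨t, ht⟩ := fun t ht =>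
    Submodule.linearProjOfIsCompl_apply_left hC ⟨t, ht⟩
  have hbz : (⟨z, hzW2⟩ : ↥W2) = bW 0 := by
    refine Subtype.ext ?_
    rw [show bW 0 = Basis.span li2 0 from rfl, Basis.span_apply]
    simp
  have hbw : (⟨w, hwW2⟩ : ↥W2) = bW 1 := by
    refine Subtype.ext ?_
    rw [show bW 1 = Basis.span li2 1 from rfl, Basis.span_apply]
    simp
  have hpz : p z = 1 := by
    show bW.coord 0 (proj z) = 1
    rw [hproj z hzW2, hbz]
    simp
  have hpw : p w = 0 := by
    show bW.coord 0 (proj w) = 0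
    rw [hproj w hwW2, hbw]
    simp
  have hqz : q z = 0 := by
    show bW.coord 1 (proj z) = 0
    rw [hproj z hzW2, hbz]
    simp
  have hqw : q w = 1 := by
    show bW.coord 1 (proj w) = 1
    rw [hproj w hwW2, hbw]
    simp
  have hrep : ∀ t ∈ W2, p t • z + q t • w = t := by
    intro t ht
    induction ht using Submodule.span_induction with
    | mem x hx =>
      obtain ⟨i, rfl⟩ := hx
      fin_cases i
      · simp [hpz, hqz]
      · simp [hpw, hqw]
    | zero => simp
    | add a b _ _ ha hb =>
      rw [_root_.map_add, _root_.map_add, add_smul, add_smul]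
      conv_rhs => rw [← ha, ← hb]
      abel
    | smul c x _ hx =>
      rw [_root_.map_smul, _root_.map_smul, smul_eq_mul, smul_eq_mul, mul_smul, mul_smul, ← smul_add, hx]
  have hD1 : derivedSeries F T 1 = ⁅(⊤ : LieIdeal F T), (⊤ : LieIdeal F T)⁆ := by
    rw [LieAlgebra.derivedSeries_def, LieAlgebra.derivedSeriesOfIdeal_succ,
      LieAlgebra.derivedSeriesOfIdeal_zero]
  have hbrD : ∀ x y : T, ⁅x, y⁆ ∈ W2 := by
    intro x y
    have hmem : ⁅x, y⁆ ∈ derivedSeries F T 1 := by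
      rw [hD1]
      exact LieSubmodule.lie_mem_lie (LieSubmodule.mem_top x) (LieSubmodule.mem_top y)
    rw [hW2eq]
    exact hmem
  have hbrZ : ∀ x t : T, t ∈ W2 → ∃ c : F, ⁅x, t⁆ = c • z := by
    intro x t ht
    have h1 : ⁅x, t⁆ ∈ LieModule.lowerCentralSeries F T T 2 := by
      rw [hlcs2]
      refine LieSubmodule.lie_mem_lie (LieSubmodule.mem_top x) ?_
      have hmem : t ∈ LieSubmodule.toSubmodule (derivedSeries F T 1) := hW2eq ▸ ht
      exact hmem
    have h2'' : ⁅x, t⁆ ∈ Submodule.span F {z} := by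
      rw [← hZspan, hZsub]
      exact h1
    obtain ⟨c, hc⟩ := Submodule.mem_span_singleton.1 h2''
    exact ⟨c, hc.symm⟩
  let γ : T →ₗ[F] F :=
    { toFun := fun x => p ⁅x, w⁆
      map_add' := fun a b => by simp only [add_lie, _root_.map_add]
      map_smul' := fun c a => by simp only [smul_lie, _root_.map_smul, RingHom.id_apply] }
  have γapp : ∀ x : T, γ x = p ⁅x, w⁆ := fun _ => rfl
  have hγ : ∀ x : T, ⁅x, w⁆ = γ x • z := by
    intro x
    obtain ⟨c, hc⟩ := hbrZ x w hwW2
    have hcc : γ x = c := by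
      rw [γapp, hc, _root_.map_smul, hpz, smul_eq_mul, mul_one]
    rw [hc, hcc]
  have γz : γ z = 0 := by rw [γapp, hzc' w, _root_.map_zero]
  have γw : γ w = 0 := by rw [γapp, lie_self, _root_.map_zero]
  have hex : ∃ x : T, γ x ≠ 0 := by
    by_contra hcon
    push_neg at hcon
    apply h2
    rw [hlcs2, LieSubmodule.lie_eq_bot_iff]
    intro x _ m hm
    have hmW2 : m ∈ W2 := by rw [hW2eq]; exact hm
    clear hm
    induction hmW2 using Submodule.span_induction with
    | mem t ht =>
      obtain ⟨i, rfl⟩ := ht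
      fin_cases i
      · simpa using hzc x
      · have hxw := hγ x
        rw [hcon x, zero_smul] at hxw
        simpa using hxw
    | zero => simp
    | add a b _ _ ha hb => rw [lie_add, ha, hb, add_zero]
    | smul c a _ ha => rw [lie_smul, ha, smul_zero]
  obtain ⟨x₀, hx₀⟩ := hex
  obtain ⟨u, hudef⟩ : ∃ u : T, u = (γ x₀)⁻¹ • x₀ := ⟨_, rfl⟩
  have hγu : γ u = 1 := by
    rw [hudef, _root_.map_smul, smul_eq_mul, inv_mul_cancel₀ hx₀]
  let δ : T →ₗ[F] F :=
    { toFun := fun x => q ⁅u, x⁆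
      map_add' := fun a b => by simp only [lie_add, _root_.map_add]
      map_smul' := fun c a => by simp only [lie_smul, _root_.map_smul, RingHom.id_apply] }
  have δapp : ∀ x : T, δ x = q ⁅u, x⁆ := fun _ => rfl
  have δz : δ z = 0 := by rw [δapp, hzc u, _root_.map_zero]
  have δw : δ w = 0 := by rw [δapp, hγ u, _root_.map_smul, hqz, smul_eq_mul, mul_zero]
  have δu : δ u = 0 := by rw [δapp, lie_self, _root_.map_zero]
  have L1 : ∀ t ∈ W2, ∀ x : T, ⁅x, t⁆ = (q t * γ x) • z := by
    intro t ht
    induction ht using Submodule.span_induction with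
    | mem a hx =>
      obtain ⟨i, rfl⟩ := hx
      fin_cases i
      · intro x; simp [hqz, hzc x]
      · intro x; simp [hqw, hγ x]
    | zero => intro x; simp
    | add a b _ _ ha hb =>
      intro x
      rw [lie_add, ha x, hb x, _root_.map_add, add_mul, add_smul]
    | smul c a _ ha =>
      intro x
      rw [lie_smul, ha x, _root_.map_smul, smul_eq_mul]
      rw [smul_smul, mul_assoc]
  have L2 : ∀ x y : T, q ⁅x, y⁆ = γ x * δ y - γ y * δ x := by
    intro x y
    have e1 : ⁅u, ⁅x, y⁆⁆ = (q ⁅x, y⁆ * γ u) • z := L1 _ (hbrD x y) u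
    have e2 : ⁅x, ⁅u, y⁆⁆ = (q ⁅u, y⁆ * γ x) • z := L1 _ (hbrD u y) x
    have e3 : ⁅⁅u, x⁆, y⁆ = -((q ⁅u, x⁆ * γ y) • z) := by
      rw [← lie_skew, L1 _ (hbrD u x) y]
    have lz := leibniz_lie u x y
    rw [e1, e2, e3, hγu, mul_one] at lz
    apply smul_left_injective F hz0
    show q ⁅x, y⁆ • z = (γ x * δ y - γ y * δ x) • z
    rw [lz, δapp, δapp, sub_smul, mul_comm (γ x) (q ⁅u, y⁆), mul_comm (γ y) (q ⁅u, x⁆)]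
    abel
  have γW2 : ∀ t ∈ W2, γ t = 0 ∧ δ t = 0 := by
    intro t ht
    induction ht using Submodule.span_induction with
    | mem a hx =>
      obtain ⟨i, rfl⟩ := hx
      fin_cases i
      · simpa using ⟨γz, δz⟩
      · simpa using ⟨γw, δw⟩
    | zero => simp
    | add a b _ _ ha hb => rw [_root_.map_add, _root_.map_add, ha.1, ha.2, hb.1, hb.2]; simp
    | smul c a _ ha => rw [_root_.map_smul, _root_.map_smul, ha.1, ha.2]; simp
  have hbne : ∃ x y : T, γ x * δ y - γ y * δ x ≠ 0 := by
    by_contra hcon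
    push_neg at hcon
    have hDZ : derivedSeries F T 1 ≤ LieAlgebra.center F T := by
      rw [hD1, LieSubmodule.lie_le_iff]
      intro x _ m _
      show ⁅x, m⁆ ∈ LieAlgebra.center F T
      have h1 : ⁅x, m⁆ ∈ Submodule.span F {z} := by
        have hr := hrep ⁅x, m⁆ (hbrD x m)
        rw [L2 x m, hcon x m, zero_smul, add_zero] at hr
        rw [← hr]
        exact Submodule.smul_mem _ _ (Submodule.mem_span_singleton_self z)
      rw [← hZspan] at h1
      exact h1
    have hmono := Submodule.finrank_mono ((LieSubmodule.toSubmodule_le_toSubmodule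
      (derivedSeries F T 1) (LieAlgebra.center F T)).2 hDZ)
    rw [hd', hcfr1] at hmono
    omega
  obtain ⟨x₁, y₁, hb1⟩ := hbne
  obtain ⟨v, hvdef⟩ : ∃ v : T,
      v = (γ x₁ * δ y₁ - γ y₁ * δ x₁)⁻¹ • (γ x₁ • y₁ - γ y₁ • x₁) := ⟨_, rfl⟩
  have hγv : γ v = 0 := by
    rw [hvdef]
    simp only [_root_.map_smul, _root_.map_sub, smul_eq_mul]
    try ring
    try simp
  have hδv : δ v = 1 := by
    rw [hvdef]
    simp only [_root_.map_smul, _root_.map_sub, smul_eq_mul]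
    exact inv_mul_cancel₀ hb1
  have range_pair : ∀ a b : T, Set.range ![a, b] = {a, b} := by
    intro a b
    ext x
    constructor
    · rintro ⟨i, rfl⟩
      fin_cases i <;> simp
    · rintro (rfl | rfl)
      · exact ⟨0, rfl⟩
      · exact ⟨1, rfl⟩
  have liuv : LinearIndependent F ![u, v] := by
    rw [linearIndependent_fin2]
    constructor
    · show v ≠ 0
      intro h
      rw [h, _root_.map_zero] at hδv
      exact zero_ne_one hδv
    · intro a huv
      show False
      have huv' : u = a • v := by
        have h0 := huv
        simp only [Matrix.cons_val_zero, Matrix.cons_val_one, Matrix.head_cons] at h0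
        first
        | exact h0
        | exact h0.symm
      have hcontra : (1 : F) = 0 := by
        rw [← hγu, huv', _root_.map_smul, hγv, smul_zero]
      exact one_ne_zero hcontra
  set Vuv : Submodule F T := Submodule.span F (Set.range ![u, v]) with hVdef
  have hVpair : Vuv = Submodule.span F {u, v} := by rw [hVdef, range_pair]
  have hfrV : Module.finrank F ↥Vuv = 2 := by
    rw [hVdef, finrank_span_eq_card liuv]
    simp
  have hdisj : Disjoint W2 Vuv := by
    rw [Submodule.disjoint_def]
    intro x hxW hxV
    rw [hVpair] at hxV
    obtain ⟨s, t, hst⟩ := Submodule.mem_span_pair.1 hxV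
    have h1 : γ x = s := by
      rw [← hst, _root_.map_add, _root_.map_smul, _root_.map_smul, hγu, hγv]
      simp
    have hh2 : δ x = t := by
      rw [← hst, _root_.map_add, _root_.map_smul, _root_.map_smul, δu, hδv]
      simp
    rw [(γW2 x hxW).1] at h1
    rw [(γW2 x hxW).2] at hh2
    rw [← hst, ← h1, ← hh2]
    simp
  set P : Submodule F T := W2 ⊔ Vuv with hPdef
  have hfrP : Module.finrank F ↥P = 4 := by
    have hhh := Submodule.finrank_sup_add_finrank_inf_eq W2 Vuv
    rw [hdisj.eq_bot, finrank_bot, hfrW2, hfrV] at hhh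
    rw [hPdef]
    omega
  have hn4 : 4 ≤ n := by
    have hle4 := Submodule.finrank_le P
    rw [hn, hfrP] at hle4
    exact hle4
  have hfrQ : Module.finrank F (T ⧸ P) = n - 4 := by
    have hq4 := Submodule.finrank_quotient_add_finrank P
    rw [hn, hfrP] at hq4
    omega
  have hAb : Module.finrank F (AbLie F (n - 4)) = n - 4 := Module.finrank_fin_fun F
  have hcond : Module.finrank F (T ⧸ P) = Module.finrank F (AbLie F (n - 4)) := by
    rw [hfrQ, hAb]
  let eQ : (T ⧸ P) ≃ₗ[F] AbLie F (n - 4) := LinearEquiv.ofFinrankEq _ _ hcond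
  let ψ : T →ₗ[F] AbLie F (n - 4) := eQ.toLinearMap ∘ₗ P.mkQ
  let γπ : T →ₗ[F] (Fin 1 → F) := LinearMap.pi fun _ => γ
  let δπ : T →ₗ[F] (Fin 1 → F) := LinearMap.pi fun _ => δ
  let heisPart : T →ₗ[F] Heis F 1 := LinearMap.prod γπ (LinearMap.prod δπ q)
  let φ : T →ₗ[F] Heis F 1 × AbLie F (n - 4) := LinearMap.prod heisPart ψ
  have happ : ∀ x : T, φ x = ((fun _ => γ x, fun _ => δ x, q x), ψ x) := fun _ => rfl
  have hψW2 : ∀ t ∈ W2, ψ t = 0 := by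
    intro t ht
    show eQ (P.mkQ t) = 0
    have hmk : P.mkQ t = 0 := by
      rw [Submodule.mkQ_apply, Submodule.Quotient.mk_eq_zero]
      exact Submodule.mem_sup_left ht
    rw [hmk, _root_.map_zero]
  have hbrT : ∀ A B : Heis F 1 × AbLie F (n - 4),
      ⁅A, B⁆ = ((0, 0, A.1.1 0 * B.1.2.1 0 - B.1.1 0 * A.1.2.1 0), 0) := by
    intro A B
    show ((0, 0, A.1.1 ⬝ᵥ B.1.2.1 - B.1.1 ⬝ᵥ A.1.2.1), (0 : AbLie F (n - 4))) = _
    refine Prod.ext (Prod.ext rfl (Prod.ext rfl ?_)) rfl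
    show A.1.1 ⬝ᵥ B.1.2.1 - B.1.1 ⬝ᵥ A.1.2.1 = _
    simp [dotProduct]
  have hφlie : ∀ x y : T, φ ⁅x, y⁆ = ⁅φ x, φ y⁆ := by
    intro x y
    rw [hbrT]
    have hγ0 : γ ⁅x, y⁆ = 0 := (γW2 _ (hbrD x y)).1
    have hδ0 : δ ⁅x, y⁆ = 0 := (γW2 _ (hbrD x y)).2
    have hψ0 : ψ ⁅x, y⁆ = 0 := hψW2 _ (hbrD x y)
    rw [happ]
    simp only [hγ0, hδ0, hψ0, L2 x y]
    rfl
  have hker : LinearMap.ker φ = Submodule.span F {z} := by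
    apply le_antisymm
    · intro x hx
      rw [LinearMap.mem_ker, happ] at hx
      have h1 : γ x = 0 := by
        have := congrArg (fun t : Heis F 1 × AbLie F (n - 4) => t.1.1 0) hx
        exact this
      have hh2 : δ x = 0 := by
        have := congrArg (fun t : Heis F 1 × AbLie F (n - 4) => t.1.2.1 0) hx
        exact this
      have h3' : q x = 0 := by
        have := congrArg (fun t : Heis F 1 × AbLie F (n - 4) => t.1.2.2) hx
        exact this
      have h4 : ψ x = 0 := by
        have := congrArg Prod.snd hx
        simpa using this
      have hxP : x ∈ P := by
        have h5 : P.mkQ x = 0 := by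
          have h6 : eQ (P.mkQ x) = eQ 0 := by rw [_root_.map_zero]; exact h4
          exact eQ.injective h6
        rwa [Submodule.mkQ_apply, Submodule.Quotient.mk_eq_zero] at h5
      obtain ⟨s, hsW, t, htV, hst⟩ := Submodule.mem_sup.1 hxP
      rw [hVpair] at htV
      obtain ⟨a, b, hab⟩ := Submodule.mem_span_pair.1 htV
      have ha : a = 0 := by
        rw [← hst, ← hab, _root_.map_add, _root_.map_add, _root_.map_smul, _root_.map_smul, (γW2 s hsW).1,
          hγu, hγv] at h1
        simpa using h1
      have hb : b = 0 := by
        rw [← hst, ← hab, _root_.map_add, _root_.map_add, _root_.map_smul, _root_.map_smul, (γW2 s hsW).2,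
          δu, hδv] at hh2
        simpa using hh2
      have hxW : x ∈ W2 := by
        rw [← hst, ← hab, ha, hb]
        simpa using hsW
      have h7 := hrep x hxW
      rw [h3', zero_smul, add_zero] at h7
      rw [← h7]
      exact Submodule.smul_mem _ _ (Submodule.mem_span_singleton_self z)
    · rw [Submodule.span_le, Set.singleton_subset_iff]
      show z ∈ LinearMap.ker φ
      rw [LinearMap.mem_ker, happ z]
      simp only [γz, δz, hqz, hψW2 z hzW2]
      rfl
  have hfrH : Module.finrank F (Heis F 1) = 3 := by
    show Module.finrank F ((Fin 1 → F) × (Fin 1 → F) × F) = 3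
    simp [Module.finrank_prod, Module.finrank_fin_fun, Module.finrank_self]
  have hfrTar : Module.finrank F (Heis F 1 × AbLie F (n - 4)) = n - 1 := by
    rw [Module.finrank_prod, hfrH, hAb]
    omega
  have hsurj : LinearMap.range φ = ⊤ := by
    apply Submodule.eq_top_of_finrank_eq
    have h5 := LinearMap.finrank_range_add_finrank_ker φ
    rw [hker, finrank_span_singleton hz0, hn] at h5
    rw [hfrTar]
    omega
  have hkerle : LieSubmodule.toSubmodule (LieAlgebra.center F T) ≤ LinearMap.ker φ := by
    rw [hker, ← hZspan]
  let ℓ : (T ⧸ LieSubmodule.toSubmodule (LieAlgebra.center F T)) →ₗ[F]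
      Heis F 1 × AbLie F (n - 4) := Submodule.liftQ _ φ hkerle
  have hℓ : ∀ a : T, ℓ (Submodule.Quotient.mk a) = φ a := fun a => Submodule.liftQ_apply _ φ a
  have hbij : Function.Bijective ℓ := by
    constructor
    · rw [← LinearMap.ker_eq_bot]
      apply Submodule.ker_liftQ_eq_bot
      rw [hker, hZspan]
    · rw [← LinearMap.range_eq_top, Submodule.range_liftQ]
      exact hsurj
  let e : (T ⧸ LieSubmodule.toSubmodule (LieAlgebra.center F T)) ≃ₗ[F]
      Heis F 1 × AbLie F (n - 4) := LinearEquiv.ofBijective ℓ hbij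
  have eapp : ∀ a : T, e (Submodule.Quotient.mk a) = φ a := fun a => hℓ a
  have eapp' : ∀ a : T,
      e ((LieSubmodule.Quotient.mk' (LieAlgebra.center F T)) a) = φ a := fun a => hℓ a
  have hml : ∀ x y : T ⧸ LieAlgebra.center F T, e ⁅x, y⁆ = ⁅e x, e y⁆ := by
    intro x y
    obtain ⟨x', rfl⟩ := LieSubmodule.Quotient.surjective_mk' (LieAlgebra.center F T) x
    obtain ⟨y', rfl⟩ := LieSubmodule.Quotient.surjective_mk' (LieAlgebra.center F T) y
    have key : (⁅(LieSubmodule.Quotient.mk' (LieAlgebra.center F T)) x',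
        (LieSubmodule.Quotient.mk' (LieAlgebra.center F T)) y'⁆ :
        T ⧸ LieAlgebra.center F T) =
        (LieSubmodule.Quotient.mk' (LieAlgebra.center F T)) ⁅x', y'⁆ := rfl
    rw [key]
    rw [eapp', eapp', eapp', hφlie]
  exact ⟨hZeq, hcfr1, ⟨⟨{ toLinearMap := ↑e, map_lie' := fun {x y} => hml x y },
    e.invFun, e.left_inv, e.right_inv⟩⟩⟩
end

section
/- For the 4-dimensional nilpotent Lie algebra L_{4,3} = ⟨x₁,x₂,x₃,x₄ : [x₁,x₂]=x₃, [x₁,x₃]=x₄⟩ of class 3, the exterior square L_{4,3} ∧ L_{4,3} is abelian of dimension 4 and the nonabelian tensor square L_{4,3} ⊗ L_{4,3} is abelian of dimension 7. -/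
open LieAlgebra Matrix Module


open LieAlgebra

open Matrix
open LieAlgebra

universe u v

section L43
variable (F : Type u) [Field F]

/-- The 4-dimensional filiform nilpotent Lie algebra `L_{4,3}` with
`[x₁,x₂] = x₃`, `[x₁,x₃] = x₄`. -/
def L43 : Type u := Fin 4 → F

instance : AddCommGroup (L43 F) := Pi.addCommGroup
instance : Module F (L43 F) := Pi.module _ _ _

instance : LieRing (L43 F) where
  bracket x y := ![0, 0, x 0 * y 1 - y 0 * x 1, x 0 * y 2 - y 0 * x 2]
  add_lie x y z := by
    funext i
    show (![0, 0, (x 0 + y 0) * z 1 - z 0 * (x 1 + y 1),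
            (x 0 + y 0) * z 2 - z 0 * (x 2 + y 2)] : Fin 4 → F) i =
      ![0, 0, x 0 * z 1 - z 0 * x 1, x 0 * z 2 - z 0 * x 2] i +
      ![0, 0, y 0 * z 1 - z 0 * y 1, y 0 * z 2 - z 0 * y 2] i
    fin_cases i <;> simp <;> ring
  lie_add x y z := by
    funext i
    show (![0, 0, x 0 * (y 1 + z 1) - (y 0 + z 0) * x 1,
            x 0 * (y 2 + z 2) - (y 0 + z 0) * x 2] : Fin 4 → F) i =
      ![0, 0, x 0 * y 1 - y 0 * x 1, x 0 * y 2 - y 0 * x 2] i +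
      ![0, 0, x 0 * z 1 - z 0 * x 1, x 0 * z 2 - z 0 * x 2] i
    fin_cases i <;> simp <;> ring
  lie_self x := by
    funext i
    show (![0, 0, x 0 * x 1 - x 0 * x 1, x 0 * x 2 - x 0 * x 2] : Fin 4 → F) i = 0
    fin_cases i <;> simp
  leibniz_lie x y z := by
    funext i
    set b : (Fin 4 → F) → (Fin 4 → F) → Fin 4 → F :=
      fun u v => ![0, 0, u 0 * v 1 - v 0 * u 1, u 0 * v 2 - v 0 * u 2] with hb
    show b x (b y z) i = b (b x y) z i + b y (b x z) i
    fin_cases i <;> simp [hb] <;> ring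

instance : LieAlgebra F (L43 F) where
  lie_smul t x y := by
    funext i
    show (![0, 0, x 0 * (t * y 1) - (t * y 0) * x 1,
            x 0 * (t * y 2) - (t * y 0) * x 2] : Fin 4 → F) i =
      (t • (![0, 0, x 0 * y 1 - y 0 * x 1, x 0 * y 2 - y 0 * x 2] : Fin 4 → F)) i
    fin_cases i <;> simp <;> ring

instance : FiniteDimensional F (L43 F) := inferInstanceAs (FiniteDimensional F (Fin 4 → F))
end L43
section AuxBasics
variable {F : Type u} [Field F]

lemma L43_bracket_def (x y : L43 F) :
    ⁅x, y⁆ = (![0, 0, x 0 * y 1 - y 0 * x 1, x 0 * y 2 - y 0 * x 2] : Fin 4 → F) := rfl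

@[simp] lemma L43_add_apply (a b : L43 F) (i : Fin 4) : (a + b) i = a i + b i := rfl
@[simp] lemma L43_smul_apply (c : F) (a : L43 F) (i : Fin 4) : (c • a) i = c * a i := rfl
@[simp] lemma L43_neg_apply (a : L43 F) (i : Fin 4) : (-a) i = -(a i) := rfl
@[simp] lemma L43_zero_apply (i : Fin 4) : (0 : L43 F) i = 0 := rfl

end AuxBasics

section XbDef
variable (F : Type u) [Field F]

/-- Standard basis vectors of `L43 F`. -/
def Xb : Fin 4 → L43 F := fun i j => if j = i then 1 else 0

@[simp] lemma Xb_apply (i j : Fin 4) : Xb F i j = if j = i then 1 else 0 := rfl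

lemma L43_decomp (a : L43 F) :
    a = a 0 • Xb F 0 + a 1 • Xb F 1 + a 2 • Xb F 2 + a 3 • Xb F 3 := by
  funext j; fin_cases j <;> simp

lemma bX00 : ⁅Xb F 0, Xb F 0⁆ = 0 := by funext k; fin_cases k <;> simp [L43_bracket_def]
lemma bX01 : ⁅Xb F 0, Xb F 1⁆ = Xb F 2 := by funext k; fin_cases k <;> simp [L43_bracket_def]
lemma bX02 : ⁅Xb F 0, Xb F 2⁆ = Xb F 3 := by funext k; fin_cases k <;> simp [L43_bracket_def]
lemma bX03 : ⁅Xb F 0, Xb F 3⁆ = 0 := by funext k; fin_cases k <;> simp [L43_bracket_def]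
lemma bX10 : ⁅Xb F 1, Xb F 0⁆ = -Xb F 2 := by funext k; fin_cases k <;> simp [L43_bracket_def]
lemma bX11 : ⁅Xb F 1, Xb F 1⁆ = 0 := by funext k; fin_cases k <;> simp [L43_bracket_def]
lemma bX12 : ⁅Xb F 1, Xb F 2⁆ = 0 := by funext k; fin_cases k <;> simp [L43_bracket_def]
lemma bX13 : ⁅Xb F 1, Xb F 3⁆ = 0 := by funext k; fin_cases k <;> simp [L43_bracket_def]
lemma bX20 : ⁅Xb F 2, Xb F 0⁆ = -Xb F 3 := by funext k; fin_cases k <;> simp [L43_bracket_def]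
lemma bX21 : ⁅Xb F 2, Xb F 1⁆ = 0 := by funext k; fin_cases k <;> simp [L43_bracket_def]
lemma bX22 : ⁅Xb F 2, Xb F 2⁆ = 0 := by funext k; fin_cases k <;> simp [L43_bracket_def]
lemma bX23 : ⁅Xb F 2, Xb F 3⁆ = 0 := by funext k; fin_cases k <;> simp [L43_bracket_def]
lemma bX30 : ⁅Xb F 3, Xb F 0⁆ = 0 := by funext k; fin_cases k <;> simp [L43_bracket_def]
lemma bX31 : ⁅Xb F 3, Xb F 1⁆ = 0 := by funext k; fin_cases k <;> simp [L43_bracket_def]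
lemma bX32 : ⁅Xb F 3, Xb F 2⁆ = 0 := by funext k; fin_cases k <;> simp [L43_bracket_def]
lemma bX33 : ⁅Xb F 3, Xb F 3⁆ = 0 := by funext k; fin_cases k <;> simp [L43_bracket_def]

lemma L43_bracket_apply_0 (x y : L43 F) : ⁅x, y⁆ 0 = 0 := rfl
lemma L43_bracket_apply_1 (x y : L43 F) : ⁅x, y⁆ 1 = 0 := rfl

end XbDef
section TmkRel
variable {F : Type u} [Field F]

lemma mkt_rel {x : FreeLieAlgebra F (L43 F × L43 F)} (h : x ∈ tensorRel F (L43 F)) :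
    (LieSubmodule.Quotient.mk
      (N := LieSubmodule.lieSpan F (FreeLieAlgebra F (L43 F × L43 F)) (tensorRel F (L43 F))) x) = 0 :=
  LieSubmodule.Quotient.mk_eq_zero'.mpr (LieSubmodule.subset_lieSpan h)

lemma tmk_smul_left (c : F) (a b : L43 F) :
    tmk F (L43 F) (c • a) b = c • tmk F (L43 F) a b := by
  have h := mkt_rel (F := F) (Or.inl ⟨c, a, b, rfl⟩)
  simp only [LieSubmodule.Quotient.mk] at h
  rw [Submodule.Quotient.mk_sub, Submodule.Quotient.mk_smul, sub_eq_zero] at h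
  exact h

lemma tmk_smul_right (c : F) (a b : L43 F) :
    tmk F (L43 F) a (c • b) = c • tmk F (L43 F) a b := by
  have h := mkt_rel (F := F) (Or.inr (Or.inl ⟨c, a, b, rfl⟩))
  simp only [LieSubmodule.Quotient.mk] at h
  rw [Submodule.Quotient.mk_sub, Submodule.Quotient.mk_smul, sub_eq_zero] at h
  exact h

lemma tmk_add_left (a a' b : L43 F) :
    tmk F (L43 F) (a + a') b = tmk F (L43 F) a b + tmk F (L43 F) a' b := by
  have h := mkt_rel (F := F) (Or.inr (Or.inr (Or.inl ⟨a, a', b, rfl⟩)))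
  simp only [LieSubmodule.Quotient.mk] at h
  rw [Submodule.Quotient.mk_sub, Submodule.Quotient.mk_sub, sub_sub, sub_eq_zero] at h
  exact h

lemma tmk_add_right (a b b' : L43 F) :
    tmk F (L43 F) a (b + b') = tmk F (L43 F) a b + tmk F (L43 F) a b' := by
  have h := mkt_rel (F := F) (Or.inr (Or.inr (Or.inr (Or.inl ⟨a, b, b', rfl⟩))))
  simp only [LieSubmodule.Quotient.mk] at h
  rw [Submodule.Quotient.mk_sub, Submodule.Quotient.mk_sub, sub_sub, sub_eq_zero] at h
  exact h

lemma tmk_rel5 (a a' b : L43 F) :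
    tmk F (L43 F) ⁅a, a'⁆ b = tmk F (L43 F) a ⁅a', b⁆ - tmk F (L43 F) a' ⁅a, b⁆ := by
  have h := mkt_rel (F := F) (Or.inr (Or.inr (Or.inr (Or.inr (Or.inl ⟨a, a', b, rfl⟩)))))
  simp only [LieSubmodule.Quotient.mk] at h
  rw [Submodule.Quotient.mk_add, Submodule.Quotient.mk_sub, sub_add_eq_add_sub, sub_eq_zero] at h
  exact eq_sub_of_add_eq h

lemma tmk_rel6 (a b b' : L43 F) :
    tmk F (L43 F) a ⁅b, b'⁆ = tmk F (L43 F) ⁅b', a⁆ b - tmk F (L43 F) ⁅b, a⁆ b' := by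
  have h := mkt_rel (F := F) (Or.inr (Or.inr (Or.inr (Or.inr (Or.inr (Or.inl ⟨a, b, b', rfl⟩))))))
  simp only [LieSubmodule.Quotient.mk] at h
  rw [Submodule.Quotient.mk_add, Submodule.Quotient.mk_sub, sub_add_eq_add_sub, sub_eq_zero] at h
  exact eq_sub_of_add_eq h

lemma tmk_rel7 (a b a' b' : L43 F) :
    ⁅tmk F (L43 F) a b, tmk F (L43 F) a' b'⁆ = -tmk F (L43 F) ⁅b, a⁆ ⁅a', b'⁆ := by
  have h := mkt_rel (F := F)
    (Or.inr (Or.inr (Or.inr (Or.inr (Or.inr (Or.inr ⟨a, b, a', b', rfl⟩))))))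
  simp only [LieSubmodule.Quotient.mk] at h
  rw [Submodule.Quotient.mk_add] at h
  exact eq_neg_of_add_eq_zero_left h

lemma tmk_zero_left (b : L43 F) : tmk F (L43 F) 0 b = 0 := by
  have := tmk_smul_left (F := F) 0 0 b; simpa using this

lemma tmk_zero_right (a : L43 F) : tmk F (L43 F) a 0 = 0 := by
  have := tmk_smul_right (F := F) 0 a 0; simpa using this

lemma tmk_neg_left (a b : L43 F) : tmk F (L43 F) (-a) b = -tmk F (L43 F) a b := by
  have := tmk_smul_left (F := F) (-1) a b; simpa using this

lemma tmk_neg_right (a b : L43 F) : tmk F (L43 F) a (-b) = -tmk F (L43 F) a b := by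
  have := tmk_smul_right (F := F) (-1) a b; simpa using this

end TmkRel
section TgDef
variable (F : Type u) [Field F]

/-- Generators of the nonabelian tensor square. -/
noncomputable def Tg (i j : Fin 4) : NTensor F (L43 F) := tmk F (L43 F) (Xb F i) (Xb F j)

/-- The designated spanning family of `L ⊗ L`. -/
noncomputable def Tvec : Fin 7 → NTensor F (L43 F) :=
  ![Tg F 0 0, Tg F 0 1, Tg F 1 0, Tg F 1 1, Tg F 0 2, Tg F 1 2, Tg F 0 3]

noncomputable def SpanT : Submodule F (NTensor F (L43 F)) :=
  Submodule.span F (Set.range (Tvec F))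

lemma T22_zero : Tg F 2 2 = 0 := by
  have h := tmk_rel7 (F := F) (Xb F 0) (Xb F 1) (Xb F 0) (Xb F 1)
  rw [lie_self, bX10, bX01, tmk_neg_left, neg_neg] at h
  exact h.symm

lemma T13_zero : Tg F 1 3 = 0 := by
  have h := tmk_rel6 (F := F) (Xb F 1) (Xb F 0) (Xb F 2)
  rw [bX02, bX21, bX01, tmk_zero_left,
    show tmk F (L43 F) (Xb F 2) (Xb F 2) = 0 from T22_zero F] at h
  simpa [Tg] using h

lemma T31_zero : Tg F 3 1 = 0 := by
  have h := tmk_rel5 (F := F) (Xb F 0) (Xb F 2) (Xb F 1)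
  rw [bX02, bX21, bX01, tmk_zero_right,
    show tmk F (L43 F) (Xb F 2) (Xb F 2) = 0 from T22_zero F] at h
  simpa [Tg] using h

lemma T23_zero : Tg F 2 3 = 0 := by
  have h := tmk_rel5 (F := F) (Xb F 0) (Xb F 1) (Xb F 3)
  rw [bX01, bX13, bX03, tmk_zero_right, tmk_zero_right] at h
  simpa [Tg] using h

lemma T32_zero : Tg F 3 2 = 0 := by
  have h := tmk_rel5 (F := F) (Xb F 0) (Xb F 2) (Xb F 2)
  rw [bX02, bX22, tmk_zero_right,
    show tmk F (L43 F) (Xb F 2) (Xb F 3) = 0 from T23_zero F] at h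
  simpa [Tg] using h

lemma T33_zero : Tg F 3 3 = 0 := by
  have h := tmk_rel5 (F := F) (Xb F 0) (Xb F 2) (Xb F 3)
  rw [bX02, bX23, bX03, tmk_zero_right, tmk_zero_right] at h
  simpa [Tg] using h

lemma T20_eq : Tg F 2 0 = -Tg F 0 2 := by
  have h := tmk_rel5 (F := F) (Xb F 0) (Xb F 1) (Xb F 0)
  rw [bX01, bX10, bX00, tmk_zero_right, tmk_neg_right] at h
  simpa [Tg] using h

lemma T21_eq : Tg F 2 1 = -Tg F 1 2 := by
  have h := tmk_rel5 (F := F) (Xb F 0) (Xb F 1) (Xb F 1)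
  rw [bX01, bX11, tmk_zero_right] at h
  simpa [Tg] using h

lemma T30_eq : Tg F 3 0 = -Tg F 0 3 := by
  have h := tmk_rel5 (F := F) (Xb F 0) (Xb F 2) (Xb F 0)
  rw [bX02, bX20, bX00, tmk_zero_right, tmk_neg_right] at h
  simpa [Tg] using h

lemma Tg_mem (i j : Fin 4) : Tg F i j ∈ SpanT F := by
  have hg : ∀ k : Fin 7, Tvec F k ∈ SpanT F := fun k => Submodule.subset_span ⟨k, rfl⟩
  fin_cases i <;> fin_cases j
  · exact hg 0
  · exact hg 1
  · exact hg 4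
  · exact hg 6
  · exact hg 2
  · exact hg 3
  · exact hg 5
  · show Tg F 1 3 ∈ SpanT F
    rw [T13_zero F]; exact zero_mem _
  · show Tg F 2 0 ∈ SpanT F
    rw [T20_eq F]; exact neg_mem (hg 4)
  · show Tg F 2 1 ∈ SpanT F
    rw [T21_eq F]; exact neg_mem (hg 5)
  · show Tg F 2 2 ∈ SpanT F
    rw [T22_zero F]; exact zero_mem _
  · show Tg F 2 3 ∈ SpanT F
    rw [T23_zero F]; exact zero_mem _
  · show Tg F 3 0 ∈ SpanT F
    rw [T30_eq F]; exact neg_mem (hg 6)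
  · show Tg F 3 1 ∈ SpanT F
    rw [T31_zero F]; exact zero_mem _
  · show Tg F 3 2 ∈ SpanT F
    rw [T32_zero F]; exact zero_mem _
  · show Tg F 3 3 ∈ SpanT F
    rw [T33_zero F]; exact zero_mem _

set_option maxHeartbeats 1000000 in
lemma tmk_mem (a b : L43 F) : tmk F (L43 F) a b ∈ SpanT F := by
  rw [L43_decomp F a, L43_decomp F b]
  simp only [tmk_add_left, tmk_add_right, tmk_smul_left, tmk_smul_right]
  repeat' apply Submodule.add_mem
  all_goals refine Submodule.smul_mem _ _ ?_
  all_goals repeat' apply Submodule.add_mem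
  all_goals exact Submodule.smul_mem _ _ (Tg_mem F _ _)

lemma tmk_lsq (u v : L43 F) (hu0 : u 0 = 0) (hu1 : u 1 = 0) (hv0 : v 0 = 0) (hv1 : v 1 = 0) :
    tmk F (L43 F) u v = 0 := by
  rw [L43_decomp F u, L43_decomp F v, hu0, hu1, hv0, hv1]
  simp only [zero_smul, zero_add, add_zero, tmk_add_left, tmk_add_right, tmk_smul_left,
    tmk_smul_right]
  rw [show tmk F (L43 F) (Xb F 2) (Xb F 2) = 0 from T22_zero F,
    show tmk F (L43 F) (Xb F 2) (Xb F 3) = 0 from T23_zero F,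
    show tmk F (L43 F) (Xb F 3) (Xb F 2) = 0 from T32_zero F,
    show tmk F (L43 F) (Xb F 3) (Xb F 3) = 0 from T33_zero F]
  simp

lemma brk_tmk (a b a' b' : L43 F) :
    ⁅tmk F (L43 F) a b, tmk F (L43 F) a' b'⁆ = 0 := by
  rw [tmk_rel7, tmk_lsq F ⁅b, a⁆ ⁅a', b'⁆ (L43_bracket_apply_0 F b a) (L43_bracket_apply_1 F b a)
    (L43_bracket_apply_0 F a' b') (L43_bracket_apply_1 F a' b'), neg_zero]

end TgDef
section SpanTop
variable (F : Type u) [Field F]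

universe uv in
lemma bracket_zero_span {L : Type uv} [LieRing L] [LieAlgebra F L] (s : Set L)
    (h : ∀ x ∈ s, ∀ y ∈ s, ⁅x, y⁆ = 0) :
    ∀ x ∈ Submodule.span F s, ∀ y ∈ Submodule.span F s, ⁅x, y⁆ = 0 := by
  intro x hx y hy
  induction hx, hy using Submodule.span_induction₂ with
  | mem_mem u v hu hv => exact h u hu v hv
  | zero_left y hy => rw [zero_lie]
  | zero_right x hx => rw [lie_zero]
  | add_left x y z hx hy hz h1 h2 => rw [add_lie, h1, h2, add_zero]
  | add_right x y z hx hy hz h1 h2 => rw [lie_add, h1, h2, add_zero]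
  | smul_left r x y hx hy h' => rw [smul_lie, h', smul_zero]
  | smul_right r x y hx hy h' => rw [lie_smul, h', smul_zero]

lemma SpanT_bracket_zero :
    ∀ x ∈ SpanT F, ∀ y ∈ SpanT F, ⁅x, y⁆ = 0 := by
  refine bracket_zero_span F (L := NTensor F (L43 F)) (Set.range (Tvec F)) ?_
  rintro u ⟨i, rfl⟩ v ⟨j, rfl⟩
  have hex : ∀ k : Fin 7, ∃ a b : L43 F, Tvec F k = tmk F (L43 F) a b := by
    intro k
    fin_cases k <;> exact ⟨_, _, rfl⟩
  obtain ⟨a, b, ha⟩ := hex i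
  obtain ⟨a', b', hb⟩ := hex j
  rw [ha, hb, brk_tmk]

/-- The preimage of `SpanT` in the free Lie algebra, as a Lie subalgebra. -/
noncomputable def KKsub : LieSubalgebra F (FreeLieAlgebra F (L43 F × L43 F)) :=
  { Submodule.comap
      ((LieSubmodule.lieSpan F (FreeLieAlgebra F (L43 F × L43 F))
        (tensorRel F (L43 F))).toSubmodule.mkQ) (SpanT F) with
    lie_mem' := by
      intro x y hx hy
      have hx' : (LieSubmodule.Quotient.mk (N := LieSubmodule.lieSpan F
          (FreeLieAlgebra F (L43 F × L43 F)) (tensorRel F (L43 F))) x) ∈ SpanT F := hx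
      have hy' : (LieSubmodule.Quotient.mk (N := LieSubmodule.lieSpan F
          (FreeLieAlgebra F (L43 F × L43 F)) (tensorRel F (L43 F))) y) ∈ SpanT F := hy
      have key : (LieSubmodule.Quotient.mk (N := LieSubmodule.lieSpan F
          (FreeLieAlgebra F (L43 F × L43 F)) (tensorRel F (L43 F))) ⁅x, y⁆) ∈ SpanT F := by
        rw [LieSubmodule.Quotient.mk_bracket, SpanT_bracket_zero F _ hx' _ hy']
        exact zero_mem _
      exact key }

noncomputable def gmap : FreeLieAlgebra F (L43 F × L43 F) →ₗ⁅F⁆ KKsub F :=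
  FreeLieAlgebra.lift F fun p =>
    (⟨FreeLieAlgebra.of F p, by
      have : tmk F (L43 F) p.1 p.2 ∈ SpanT F := tmk_mem F p.1 p.2
      exact this⟩ : KKsub F)

lemma mk_mem_SpanT (x : FreeLieAlgebra F (L43 F × L43 F)) :
    (LieSubmodule.Quotient.mk (N := LieSubmodule.lieSpan F
      (FreeLieAlgebra F (L43 F × L43 F)) (tensorRel F (L43 F))) x) ∈ SpanT F := by
  have h : (KKsub F).incl.comp (gmap F) = LieHom.id :=
    FreeLieAlgebra.hom_ext fun p => by
      rw [LieHom.comp_apply, gmap, FreeLieAlgebra.lift_of_apply]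
      rfl
  have hx : x ∈ KKsub F := by
    have h2 : ((KKsub F).incl.comp (gmap F)) x = x := by rw [h]; rfl
    rw [← h2]
    exact ((gmap F) x).2
  exact hx

lemma SpanT_eq_top : SpanT F = ⊤ := by
  rw [eq_top_iff]
  rintro z -
  obtain ⟨x, rfl⟩ := Submodule.Quotient.mk_surjective _ z
  exact mk_mem_SpanT F x

lemma NTensor_mem_SpanT (z : NTensor F (L43 F)) : z ∈ SpanT F := by
  rw [SpanT_eq_top]; trivial

instance NTensor_abelian : IsLieAbelian (NTensor F (L43 F)) :=
  ⟨fun x y => SpanT_bracket_zero F x (NTensor_mem_SpanT F x) y (NTensor_mem_SpanT F y)⟩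

end SpanTop
section PhiPart
variable (F : Type u) [Field F]

@[simp] lemma AbLie_add_apply {k : ℕ} (a b : AbLie F k) (i : Fin k) : (a + b) i = a i + b i := rfl
@[simp] lemma AbLie_sub_apply {k : ℕ} (a b : AbLie F k) (i : Fin k) : (a - b) i = a i - b i := rfl
@[simp] lemma AbLie_smul_apply {k : ℕ} (c : F) (a : AbLie F k) (i : Fin k) :
    (c • a) i = c * a i := rfl
@[simp] lemma AbLie_neg_apply {k : ℕ} (a : AbLie F k) (i : Fin k) : (-a) i = -(a i) := rfl
@[simp] lemma AbLie_zero_apply {k : ℕ} (i : Fin k) : (0 : AbLie F k) i = 0 := rfl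
@[simp] lemma AbLie_bracket {k : ℕ} (x y : AbLie F k) : ⁅x, y⁆ = 0 := rfl

/-- The linear model of the nonabelian tensor square. -/
def ffun : L43 F × L43 F → AbLie F 7 := fun p i =>
  if i = 0 then p.1 0 * p.2 0
  else if i = 1 then p.1 0 * p.2 1
  else if i = 2 then p.1 1 * p.2 0
  else if i = 3 then p.1 1 * p.2 1
  else if i = 4 then p.1 0 * p.2 2 - p.1 2 * p.2 0
  else if i = 5 then p.1 1 * p.2 2 - p.1 2 * p.2 1
  else p.1 0 * p.2 3 - p.1 3 * p.2 0

lemma ffun_rel : ∀ r ∈ tensorRel F (L43 F), FreeLieAlgebra.lift F (ffun F) r = 0 := by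
  intro r hr
  simp only [tensorRel, Set.mem_setOf_eq] at hr
  rcases hr with ⟨c,a,b,rfl⟩|⟨c,a,b,rfl⟩|⟨a,a',b,rfl⟩|⟨a,b,b',rfl⟩|⟨a,a',b,rfl⟩|⟨a,b,b',rfl⟩|
    ⟨a,b,a',b',rfl⟩ <;>
  simp only [map_sub, map_add, _root_.map_smul, LieHom.map_lie,
    FreeLieAlgebra.lift_of_apply] <;>
  · funext i
    fin_cases i <;>
      simp [ffun, L43_bracket_def] <;> ring

lemma phi_ker_le :
    (LieSubmodule.lieSpan F (FreeLieAlgebra F (L43 F × L43 F))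
      (tensorRel F (L43 F))).toSubmodule ≤
    LinearMap.ker (FreeLieAlgebra.lift F (ffun F)).toLinearMap := by
  have h1 : LieSubmodule.lieSpan F (FreeLieAlgebra F (L43 F × L43 F)) (tensorRel F (L43 F)) ≤
      (FreeLieAlgebra.lift F (ffun F)).ker := by
    rw [LieSubmodule.lieSpan_le]
    intro r hr
    exact LieHom.mem_ker.mpr (ffun_rel F r hr)
  intro x hx
  exact LinearMap.mem_ker.mpr (LieHom.mem_ker.mp (h1 hx))

noncomputable def phiLin : NTensor F (L43 F) →ₗ[F] AbLie F 7 :=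
  Submodule.liftQ _ (FreeLieAlgebra.lift F (ffun F)).toLinearMap (phi_ker_le F)

lemma phiLin_tmk (a b : L43 F) : phiLin F (tmk F (L43 F) a b) = ffun F (a, b) := by
  have h : phiLin F (tmk F (L43 F) a b) =
      (FreeLieAlgebra.lift F (ffun F)) (FreeLieAlgebra.of F (a, b)) := rfl
  rw [h, FreeLieAlgebra.lift_of_apply]

def ev7 (k : Fin 7) : AbLie F 7 := fun j => if j = k then 1 else 0

lemma phi_Tg (i j : Fin 4) : phiLin F (Tg F i j) = ffun F (Xb F i, Xb F j) := by
  rw [Tg, phiLin_tmk]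

lemma phi_Tvec0 : phiLin F (Tvec F 0) = ev7 F 0 := by
  rw [show Tvec F 0 = Tg F 0 0 from rfl, phi_Tg]
  funext i; fin_cases i <;> simp [ffun, ev7]
lemma phi_Tvec1 : phiLin F (Tvec F 1) = ev7 F 1 := by
  rw [show Tvec F 1 = Tg F 0 1 from rfl, phi_Tg]
  funext i; fin_cases i <;> simp [ffun, ev7]
lemma phi_Tvec2 : phiLin F (Tvec F 2) = ev7 F 2 := by
  rw [show Tvec F 2 = Tg F 1 0 from rfl, phi_Tg]
  funext i; fin_cases i <;> simp [ffun, ev7]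
lemma phi_Tvec3 : phiLin F (Tvec F 3) = ev7 F 3 := by
  rw [show Tvec F 3 = Tg F 1 1 from rfl, phi_Tg]
  funext i; fin_cases i <;> simp [ffun, ev7]
lemma phi_Tvec4 : phiLin F (Tvec F 4) = ev7 F 4 := by
  rw [show Tvec F 4 = Tg F 0 2 from rfl, phi_Tg]
  funext i; fin_cases i <;> simp [ffun, ev7]
lemma phi_Tvec5 : phiLin F (Tvec F 5) = ev7 F 5 := by
  rw [show Tvec F 5 = Tg F 1 2 from rfl, phi_Tg]
  funext i; fin_cases i <;> simp [ffun, ev7]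
lemma phi_Tvec6 : phiLin F (Tvec F 6) = ev7 F 6 := by
  rw [show Tvec F 6 = Tg F 0 3 from rfl, phi_Tg]
  funext i; fin_cases i <;> simp [ffun, ev7]

noncomputable def uT : (Fin 7 → F) →ₗ[F] NTensor F (L43 F) :=
  Fintype.linearCombination F (Tvec F)

lemma uT_left_inverse : Function.LeftInverse (phiLin F) (uT F) := by
  intro c
  change phiLin F (∑ i, c i • Tvec F i) = c
  rw [Fin.sum_univ_seven]
  simp only [map_add, _root_.map_smul, phi_Tvec0, phi_Tvec1, phi_Tvec2, phi_Tvec3, phi_Tvec4,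
    phi_Tvec5, phi_Tvec6]
  funext i
  fin_cases i <;> simp [ev7]

lemma uT_surjective : Function.Surjective (uT F) := by
  rw [← LinearMap.range_eq_top, uT, Fintype.range_linearCombination]
  rw [show Submodule.span F (Set.range (Tvec F)) = SpanT F from rfl]
  exact SpanT_eq_top F

noncomputable def eqT : (Fin 7 → F) ≃ₗ[F] NTensor F (L43 F) :=
  LinearEquiv.ofBijective (uT F) ⟨(uT_left_inverse F).injective, uT_surjective F⟩

lemma finrank_NTensor : Module.finrank F (NTensor F (L43 F)) = 7 := by
  rw [← LinearEquiv.finrank_eq (eqT F), Module.finrank_fin_fun]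

end PhiPart
section PsiPart
variable (F : Type u) [Field F]

/-- The linear model of the exterior square. -/
def gfun : L43 F × L43 F → AbLie F 4 := fun p i =>
  if i = 0 then p.1 0 * p.2 1 - p.1 1 * p.2 0
  else if i = 1 then p.1 0 * p.2 2 - p.1 2 * p.2 0
  else if i = 2 then p.1 0 * p.2 3 - p.1 3 * p.2 0
  else p.1 1 * p.2 2 - p.1 2 * p.2 1

lemma gfun_rel : ∀ r ∈ tensorRel F (L43 F), FreeLieAlgebra.lift F (gfun F) r = 0 := by
  intro r hr
  simp only [tensorRel, Set.mem_setOf_eq] at hr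
  rcases hr with ⟨c,a,b,rfl⟩|⟨c,a,b,rfl⟩|⟨a,a',b,rfl⟩|⟨a,b,b',rfl⟩|⟨a,a',b,rfl⟩|⟨a,b,b',rfl⟩|
    ⟨a,b,a',b',rfl⟩ <;>
  simp only [map_sub, map_add, _root_.map_smul, LieHom.map_lie,
    FreeLieAlgebra.lift_of_apply] <;>
  · funext i
    fin_cases i <;>
      simp [gfun, L43_bracket_def] <;> ring

lemma psi_ker_le :
    (LieSubmodule.lieSpan F (FreeLieAlgebra F (L43 F × L43 F))
      (tensorRel F (L43 F))).toSubmodule ≤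
    LinearMap.ker (FreeLieAlgebra.lift F (gfun F)).toLinearMap := by
  have h1 : LieSubmodule.lieSpan F (FreeLieAlgebra F (L43 F × L43 F)) (tensorRel F (L43 F)) ≤
      (FreeLieAlgebra.lift F (gfun F)).ker := by
    rw [LieSubmodule.lieSpan_le]
    intro r hr
    exact LieHom.mem_ker.mpr (gfun_rel F r hr)
  intro x hx
  exact LinearMap.mem_ker.mpr (LieHom.mem_ker.mp (h1 hx))

noncomputable def psiLin : NTensor F (L43 F) →ₗ[F] AbLie F 4 :=
  Submodule.liftQ _ (FreeLieAlgebra.lift F (gfun F)).toLinearMap (psi_ker_le F)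

lemma psiLin_tmk (a b : L43 F) : psiLin F (tmk F (L43 F) a b) = gfun F (a, b) := by
  have h : psiLin F (tmk F (L43 F) a b) =
      (FreeLieAlgebra.lift F (gfun F)) (FreeLieAlgebra.of F (a, b)) := rfl
  rw [h, FreeLieAlgebra.lift_of_apply]

/-- The kernel of `psiLin` as a Lie ideal (using that `NTensor` is abelian). -/
noncomputable def psiKer : LieIdeal F (NTensor F (L43 F)) :=
  { LinearMap.ker (psiLin F) with
    lie_mem := by
      intro x m hm
      have h : ⁅x, m⁆ = 0 := trivial_lie_zero _ _ x m
      show ⁅x, m⁆ ∈ LinearMap.ker (psiLin F)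
      rw [h]
      exact zero_mem _ }

lemma sqIdeal_le_psiKer : sqIdeal F (L43 F) ≤ psiKer F := by
  rw [sqIdeal, LieSubmodule.lieSpan_le]
  rintro x ⟨a, rfl⟩
  show psiLin F (tmk F (L43 F) a a) = 0
  rw [psiLin_tmk]
  funext i
  fin_cases i <;> simp [gfun] <;> ring

lemma psi_ker_le' : (sqIdeal F (L43 F)).toSubmodule ≤ LinearMap.ker (psiLin F) := by
  intro x hx
  exact sqIdeal_le_psiKer F hx

noncomputable def psiE : ExtSq F (L43 F) →ₗ[F] AbLie F 4 :=
  Submodule.liftQ _ (psiLin F) (psi_ker_le' F)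

lemma psiE_wmk (a b : L43 F) : psiE F (wmk F (L43 F) a b) = gfun F (a, b) := by
  have h : psiE F (wmk F (L43 F) a b) = psiLin F (tmk F (L43 F) a b) := rfl
  rw [h, psiLin_tmk]

end PsiPart
section WPart
variable (F : Type u) [Field F]

noncomputable def mkE : NTensor F (L43 F) →ₗ[F] ExtSq F (L43 F) :=
  (sqIdeal F (L43 F)).toSubmodule.mkQ

lemma wmk_eq (a b : L43 F) : wmk F (L43 F) a b = mkE F (tmk F (L43 F) a b) := rfl

lemma wdiag (a : L43 F) : mkE F (tmk F (L43 F) a a) = 0 := by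
  have hm : tmk F (L43 F) a a ∈ (sqIdeal F (L43 F)).toSubmodule :=
    LieSubmodule.subset_lieSpan ⟨a, rfl⟩
  exact (Submodule.Quotient.mk_eq_zero _).mpr hm

noncomputable def Wvec : Fin 4 → ExtSq F (L43 F) :=
  ![wmk F (L43 F) (Xb F 0) (Xb F 1), wmk F (L43 F) (Xb F 0) (Xb F 2),
    wmk F (L43 F) (Xb F 0) (Xb F 3), wmk F (L43 F) (Xb F 1) (Xb F 2)]

noncomputable def SpanW : Submodule F (ExtSq F (L43 F)) :=
  Submodule.span F (Set.range (Wvec F))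

lemma hW (k : Fin 7) : mkE F (Tvec F k) ∈ SpanW F := by
  have hg : ∀ m : Fin 4, Wvec F m ∈ SpanW F := fun m => Submodule.subset_span ⟨m, rfl⟩
  fin_cases k
  · show mkE F (Tg F 0 0) ∈ SpanW F
    rw [Tg, wdiag]; exact zero_mem _
  · exact hg 0
  · -- T10 : mkE T10 = - mkE T01
    show mkE F (Tg F 1 0) ∈ SpanW F
    have h := wdiag F (Xb F 0 + Xb F 1)
    rw [tmk_add_left, tmk_add_right, tmk_add_right, map_add, map_add, map_add,
      wdiag F (Xb F 0), wdiag F (Xb F 1)] at h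
    rw [zero_add, add_zero] at h
    have h2 : mkE F (tmk F (L43 F) (Xb F 1) (Xb F 0)) =
        -(mkE F (tmk F (L43 F) (Xb F 0) (Xb F 1))) := by
      rw [add_comm] at h
      exact eq_neg_of_add_eq_zero_left h
    rw [Tg, h2]
    exact neg_mem (hg 0)
  · show mkE F (Tg F 1 1) ∈ SpanW F
    rw [Tg, wdiag]; exact zero_mem _
  · exact hg 1
  · exact hg 3
  · exact hg 2

lemma ExtSq_mem_SpanW (z : ExtSq F (L43 F)) : z ∈ SpanW F := by
  obtain ⟨y, rfl⟩ := Submodule.Quotient.mk_surjective _ z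
  have h1 : mkE F y ∈ Submodule.map (mkE F) (SpanT F) :=
    ⟨y, NTensor_mem_SpanT F y, rfl⟩
  rw [show SpanT F = Submodule.span F (Set.range (Tvec F)) from rfl,
    Submodule.map_span] at h1
  refine Submodule.span_le.mpr ?_ h1
  rintro _ ⟨_, ⟨k, rfl⟩, rfl⟩
  exact hW F k

def ev4 (k : Fin 4) : AbLie F 4 := fun j => if j = k then 1 else 0

lemma psi_Wvec0 : psiE F (Wvec F 0) = ev4 F 0 := by
  rw [show Wvec F 0 = wmk F (L43 F) (Xb F 0) (Xb F 1) from rfl, psiE_wmk]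
  funext i; fin_cases i <;> simp [gfun, ev4]
lemma psi_Wvec1 : psiE F (Wvec F 1) = ev4 F 1 := by
  rw [show Wvec F 1 = wmk F (L43 F) (Xb F 0) (Xb F 2) from rfl, psiE_wmk]
  funext i; fin_cases i <;> simp [gfun, ev4]
lemma psi_Wvec2 : psiE F (Wvec F 2) = ev4 F 2 := by
  rw [show Wvec F 2 = wmk F (L43 F) (Xb F 0) (Xb F 3) from rfl, psiE_wmk]
  funext i; fin_cases i <;> simp [gfun, ev4]
lemma psi_Wvec3 : psiE F (Wvec F 3) = ev4 F 3 := by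
  rw [show Wvec F 3 = wmk F (L43 F) (Xb F 1) (Xb F 2) from rfl, psiE_wmk]
  funext i; fin_cases i <;> simp [gfun, ev4]

noncomputable def uW : (Fin 4 → F) →ₗ[F] ExtSq F (L43 F) :=
  Fintype.linearCombination F (Wvec F)

lemma uW_left_inverse : Function.LeftInverse (psiE F) (uW F) := by
  intro c
  change psiE F (∑ i, c i • Wvec F i) = c
  rw [Fin.sum_univ_four]
  simp only [map_add, _root_.map_smul, psi_Wvec0, psi_Wvec1, psi_Wvec2, psi_Wvec3]
  funext i
  fin_cases i <;> simp [ev4]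

lemma uW_surjective : Function.Surjective (uW F) := by
  rw [← LinearMap.range_eq_top, uW, Fintype.range_linearCombination]
  rw [show Submodule.span F (Set.range (Wvec F)) = SpanW F from rfl]
  rw [eq_top_iff]
  rintro z -
  exact ExtSq_mem_SpanW F z

noncomputable def eqW : (Fin 4 → F) ≃ₗ[F] ExtSq F (L43 F) :=
  LinearEquiv.ofBijective (uW F) ⟨(uW_left_inverse F).injective, uW_surjective F⟩

lemma finrank_ExtSq : Module.finrank F (ExtSq F (L43 F)) = 4 := by
  rw [← LinearEquiv.finrank_eq (eqW F), Module.finrank_fin_fun]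

instance ExtSq_abelian : IsLieAbelian (ExtSq F (L43 F)) := by
  constructor
  intro x y
  obtain ⟨a, rfl⟩ := Submodule.Quotient.mk_surjective _ x
  obtain ⟨b, rfl⟩ := Submodule.Quotient.mk_surjective _ y
  have h : (LieSubmodule.Quotient.mk (N := sqIdeal F (L43 F)) ⁅a, b⁆) =
      ⁅(LieSubmodule.Quotient.mk (N := sqIdeal F (L43 F)) a),
        (LieSubmodule.Quotient.mk (N := sqIdeal F (L43 F)) b)⁆ :=
    LieSubmodule.Quotient.mk_bracket _ a b
  rw [← h, trivial_lie_zero]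
  exact Submodule.Quotient.mk_zero _

end WPart

/-- `L_{4,3} ∧ L_{4,3}` is abelian of dimension 4 and
`L_{4,3} ⊗ L_{4,3}` is abelian of dimension 7. -/
theorem L43_exterior_and_tensor (F : Type u) [Field F] :
    IsLieAbelian (ExtSq F (L43 F)) ∧ Module.finrank F (ExtSq F (L43 F)) = 4 ∧
    IsLieAbelian (NTensor F (L43 F)) ∧ Module.finrank F (NTensor F (L43 F)) = 7 :=
  ⟨ExtSq_abelian F, finrank_ExtSq F, NTensor_abelian F, finrank_NTensor F⟩
end
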